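/- arXiv:1607.08498 — 14 statements merged into one kernel-verified Lean document; each statement's English description precedes it below -/
import Mathlib

section
/- Let (x*, λ*, μ*) satisfy the KKT conditions for the problem min f(x) subject to l ≤ x ≤ u, i.e. x* ∈ [l,u], g(x*) − λ* + μ* = 0, (l_i − x*_i)λ*_i = 0, (x*_i − u_i)μ*_i = 0, and λ*_i ≥ 0, μ*_i ≥ 0 for all i. Then there exists ρ > 0 such that for every x ∈ [l,u] with ‖x − x*‖ < ρ one has {i : x*_i = l_i and λ*_i > 0} ⊆ A_l(x) ⊆ {i : x*_i = l_i} and {i : x*_i = u_i and μ*_i > 0} ⊆ A_u(x) ⊆ {i : x*_i = u_i}. -/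
open Finset

/-- The gradient of `f` at `x`: its `i`-th component is the partial derivative of `f`
in the `i`-th coordinate direction (the Euclidean gradient). -/
noncomputable def grad {n : ℕ} (f : (Fin n → ℝ) → ℝ) (x : Fin n → ℝ) (i : Fin n) : ℝ :=
  fderiv ℝ f x (Pi.single i 1)

/-- The multiplier function `λ_i(x)`. -/
noncomputable def lamMul {n : ℕ} (f : (Fin n → ℝ) → ℝ) (l u x : Fin n → ℝ) (i : Fin n) : ℝ :=
  (u i - x i) ^ 2 / ((l i - x i) ^ 2 + (u i - x i) ^ 2) * grad f x i

/-- The multiplier function `μ_i(x)`. -/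
noncomputable def muMul {n : ℕ} (f : (Fin n → ℝ) → ℝ) (l u x : Fin n → ℝ) (i : Fin n) : ℝ :=
  -((l i - x i) ^ 2 / ((l i - x i) ^ 2 + (u i - x i) ^ 2) * grad f x i)

/-- The estimate `A_l(x)` of the variables active at the lower bound. -/
def estAl {n : ℕ} (f : (Fin n → ℝ) → ℝ) (l u : Fin n → ℝ) (ε : ℝ) (x : Fin n → ℝ) :
    Set (Fin n) :=
  {i | l i ≤ x i ∧ x i ≤ l i + ε * lamMul f l u x i ∧ 0 < grad f x i}

/-- The estimate `A_u(x)` of the variables active at the upper bound. -/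
def estAu {n : ℕ} (f : (Fin n → ℝ) → ℝ) (l u : Fin n → ℝ) (ε : ℝ) (x : Fin n → ℝ) :
    Set (Fin n) :=
  {i | u i - ε * muMul f l u x i ≤ x i ∧ x i ≤ u i ∧ grad f x i < 0}

/-- The estimate `N(x)` of the non-active variables. -/
def estN {n : ℕ} (f : (Fin n → ℝ) → ℝ) (l u : Fin n → ℝ) (ε : ℝ) (x : Fin n → ℝ) :
    Set (Fin n) :=
  {i | i ∉ estAl f l u ε x ∧ i ∉ estAu f l u ε x}

/-- Componentwise projection onto the box `[l, u]`. -/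
def projBox {n : ℕ} (l u y : Fin n → ℝ) : Fin n → ℝ :=
  fun i => min (u i) (max (l i) (y i))

/-- First-order optimality (stationarity) conditions at a feasible point. -/
def IsStationaryBox {n : ℕ} (f : (Fin n → ℝ) → ℝ) (l u x : Fin n → ℝ) : Prop :=
  ∀ i, (x i = l i → 0 ≤ grad f x i) ∧ (x i = u i → grad f x i ≤ 0) ∧
    (l i < x i → x i < u i → grad f x i = 0)

/-- near a KKT point, the active-set estimates are sandwiched between the
strongly active constraints and the active constraints. -/
theorem active_set_identification {n : ℕ} (f : (Fin n → ℝ) → ℝ) (hf : ContDiff ℝ 2 f)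
    (l u : Fin n → ℝ) (hlu : ∀ i, l i < u i) (ε : ℝ) (hε : 0 < ε)
    (xs lam mu : Fin n → ℝ)
    (hfeas : ∀ i, l i ≤ xs i ∧ xs i ≤ u i)
    (hkkt1 : ∀ i, grad f xs i - lam i + mu i = 0)
    (hkkt2 : ∀ i, (l i - xs i) * lam i = 0)
    (hkkt3 : ∀ i, (xs i - u i) * mu i = 0)
    (hkkt4 : ∀ i, 0 ≤ lam i ∧ 0 ≤ mu i) :
    ∃ ρ > (0 : ℝ), ∀ x : Fin n → ℝ, (∀ i, l i ≤ x i ∧ x i ≤ u i) →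
      Real.sqrt (∑ i, (x i - xs i) ^ 2) < ρ →
      ({i | xs i = l i ∧ 0 < lam i} ⊆ estAl f l u ε x ∧
        estAl f l u ε x ⊆ {i | xs i = l i}) ∧
      ({i | xs i = u i ∧ 0 < mu i} ⊆ estAu f l u ε x ∧
        estAu f l u ε x ⊆ {i | xs i = u i}) := by
  classical
  have hmain : ∀ i, grad f xs i = lam i - mu i := fun i => by linarith [hkkt1 i]
  have hden : ∀ (x : Fin n → ℝ) (i : Fin n), 0 < (l i - x i) ^ 2 + (u i - x i) ^ 2 := by
    intro x i
    rcases eq_or_ne (x i) (l i) with h | h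
    · have h1 : 0 < (u i - x i) ^ 2 := by
        have : u i - x i ≠ 0 := by rw [h]; exact sub_ne_zero.mpr (hlu i).ne'
        positivity
      nlinarith [sq_nonneg (l i - x i)]
    · have h1 : 0 < (l i - x i) ^ 2 := by
        have : l i - x i ≠ 0 := sub_ne_zero.mpr (Ne.symm h)
        positivity
      nlinarith [sq_nonneg (u i - x i)]
  have hg : ∀ i, Continuous fun x => grad f x i := by
    intro i
    have h1 : Continuous (fderiv ℝ f) := hf.continuous_fderiv (by norm_num)
    exact h1.clm_apply continuous_const
  have hlamc : ∀ i, Continuous fun x => lamMul f l u x i := by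
    intro i
    unfold lamMul
    exact ((((continuous_const.sub (continuous_apply i)).pow 2).div
      ((((continuous_const.sub (continuous_apply i)).pow 2)).add
        (((continuous_const.sub (continuous_apply i)).pow 2)))
      (fun x => (hden x i).ne')).mul (hg i))
  have hmuc : ∀ i, Continuous fun x => muMul f l u x i := by
    intro i
    unfold muMul
    exact ((((continuous_const.sub (continuous_apply i)).pow 2).div
      ((((continuous_const.sub (continuous_apply i)).pow 2)).add
        (((continuous_const.sub (continuous_apply i)).pow 2)))
      (fun x => (hden x i).ne')).mul (hg i)).neg
  have hAl_bound : ∀ (x : Fin n → ℝ) (i : Fin n), 0 < grad f x i →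
      lamMul f l u x i ≤ grad f x i := by
    intro x i hgx
    unfold lamMul
    have h1 : (u i - x i) ^ 2 / ((l i - x i) ^ 2 + (u i - x i) ^ 2) ≤ 1 :=
      (div_le_one (hden x i)).mpr (le_add_of_nonneg_left (sq_nonneg _))
    calc (u i - x i) ^ 2 / ((l i - x i) ^ 2 + (u i - x i) ^ 2) * grad f x i
        ≤ 1 * grad f x i := by
          apply mul_le_mul_of_nonneg_right h1 hgx.le
      _ = grad f x i := one_mul _
  have hAu_bound : ∀ (x : Fin n → ℝ) (i : Fin n), grad f x i < 0 →
      muMul f l u x i ≤ -grad f x i := by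
    intro x i hgx
    unfold muMul
    have h1 : (l i - x i) ^ 2 / ((l i - x i) ^ 2 + (u i - x i) ^ 2) ≤ 1 :=
      (div_le_one (hden x i)).mpr (le_add_of_nonneg_right (sq_nonneg _))
    have h2 : 0 ≤ (l i - x i) ^ 2 / ((l i - x i) ^ 2 + (u i - x i) ^ 2) :=
      div_nonneg (sq_nonneg _) (hden x i).le
    nlinarith
  have notAl : ∀ (x : Fin n → ℝ) (i : Fin n), l i + ε * grad f x i < x i →
      i ∉ estAl f l u ε x := by
    intro x i h hx
    obtain ⟨h1, h2, h3⟩ := hx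
    have h4 := hAl_bound x i h3
    have h5 : ε * lamMul f l u x i ≤ ε * grad f x i :=
      mul_le_mul_of_nonneg_left h4 hε.le
    linarith
  have notAu : ∀ (x : Fin n → ℝ) (i : Fin n), x i < u i + ε * grad f x i →
      i ∉ estAu f l u ε x := by
    intro x i h hx
    obtain ⟨h1, h2, h3⟩ := hx
    have h4 := hAu_bound x i h3
    have h5 : ε * muMul f l u x i ≤ ε * (-grad f x i) :=
      mul_le_mul_of_nonneg_left h4 hε.le
    have h6 : ε * (-grad f x i) = -(ε * grad f x i) := by ring
    linarith
  have key : ∀ i : Fin n, ∃ S : Set (Fin n → ℝ), IsOpen S ∧ xs ∈ S ∧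
      ∀ x ∈ S, l i ≤ x i → x i ≤ u i →
        ((xs i = l i ∧ 0 < lam i → i ∈ estAl f l u ε x) ∧
         (i ∈ estAl f l u ε x → xs i = l i) ∧
         (xs i = u i ∧ 0 < mu i → i ∈ estAu f l u ε x) ∧
         (i ∈ estAu f l u ε x → xs i = u i)) := by
    intro i
    rcases eq_or_lt_of_le (hfeas i).1 with hl | hl
    · -- xs i = l i
      have hune : xs i ≠ u i := by rw [← hl]; exact (hlu i).ne
      have hmu0 : mu i = 0 :=
        (mul_eq_zero.mp (hkkt3 i)).resolve_left (sub_ne_zero.mpr hune)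
      have hgxs : grad f xs i = lam i := by rw [hmain i, hmu0]; ring
      by_cases hlam : 0 < lam i
      · refine ⟨{x | x i < l i + ε * lamMul f l u x i} ∩ {x | 0 < grad f x i},
          ?_, ?_, ?_⟩
        · exact (isOpen_lt (continuous_apply i)
            (continuous_const.add (continuous_const.mul (hlamc i)))).inter
            (isOpen_lt continuous_const (hg i))
        · constructor
          · show xs i < l i + ε * lamMul f l u xs i
            have hlv : lamMul f l u xs i = lam i := by
              unfold lamMul
              rw [← hl, hgxs]
              have h2 : (u i - l i) ^ 2 ≠ 0 := pow_ne_zero 2 (sub_ne_zero.mpr (hlu i).ne')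
              field_simp
              ring
            rw [hlv, ← hl]
            nlinarith [mul_pos hε hlam]
          · show 0 < grad f xs i
            rw [hgxs]; exact hlam
        · rintro x ⟨hx1, hx2⟩ hxl hxu
          refine ⟨fun _ => ⟨hxl, hx1.le, hx2⟩, fun _ => hl.symm,
            fun h => absurd (hl.trans h.1) (hlu i).ne,
            fun h => absurd h.2.2 (not_lt.mpr hx2.le)⟩
      · have hlam0 : lam i = 0 := le_antisymm (not_lt.mp hlam) (hkkt4 i).1
        refine ⟨{x | x i < u i + ε * grad f x i},
          isOpen_lt (continuous_apply i)
            (continuous_const.add (continuous_const.mul (hg i))), ?_, ?_⟩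
        · show xs i < u i + ε * grad f xs i
          rw [hgxs, hlam0, ← hl]
          simpa using hlu i
        · intro x hx hxl hxu
          exact ⟨fun h => absurd h.2 hlam, fun _ => hl.symm,
            fun h => absurd (hl.trans h.1) (hlu i).ne,
            fun h => absurd hx (by simpa using notAu x i · h)⟩
    · -- l i < xs i
      have hlam0 : lam i = 0 :=
        (mul_eq_zero.mp (hkkt2 i)).resolve_left (sub_ne_zero.mpr hl.ne)
      rcases eq_or_lt_of_le (hfeas i).2 with hu | hu
      · -- xs i = u i
        have hgxs : grad f xs i = -mu i := by rw [hmain i, hlam0]; ring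
        by_cases hmu : 0 < mu i
        · refine ⟨{x | u i - ε * muMul f l u x i < x i} ∩ {x | grad f x i < 0},
            ?_, ?_, ?_⟩
          · exact (isOpen_lt
              (continuous_const.sub (continuous_const.mul (hmuc i)))
              (continuous_apply i)).inter (isOpen_lt (hg i) continuous_const)
          · constructor
            · show u i - ε * muMul f l u xs i < xs i
              have hmv : muMul f l u xs i = mu i := by
                unfold muMul
                rw [hu, hgxs]
                have h2 : (l i - u i) ^ 2 ≠ 0 :=
                  pow_ne_zero 2 (sub_ne_zero.mpr (hlu i).ne)
                field_simp
                ring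
              rw [hmv, hu]
              nlinarith [mul_pos hε hmu]
            · show grad f xs i < 0
              rw [hgxs]; linarith
          · rintro x ⟨hx1, hx2⟩ hxl hxu
            refine ⟨fun h => absurd h.2 (by rw [hlam0]; exact lt_irrefl 0),
              fun h => absurd h.2.2 (not_lt.mpr hx2.le),
              fun _ => ⟨hx1.le, hxu, hx2⟩, fun _ => hu⟩
        · have hmu0 : mu i = 0 := le_antisymm (not_lt.mp hmu) (hkkt4 i).2
          refine ⟨{x | l i + ε * grad f x i < x i},
            isOpen_lt (continuous_const.add (continuous_const.mul (hg i)))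
              (continuous_apply i), ?_, ?_⟩
          · show l i + ε * grad f xs i < xs i
            rw [hgxs, hmu0]
            simpa using hl
          · intro x hx hxl hxu
            exact ⟨fun h => absurd h.2 (by rw [hlam0]; exact lt_irrefl 0),
              fun h => absurd hx (by simpa using notAl x i · h),
              fun h => absurd h.2 hmu, fun _ => hu⟩
      · -- interior
        have hmu0 : mu i = 0 :=
          (mul_eq_zero.mp (hkkt3 i)).resolve_left (sub_ne_zero.mpr hu.ne)
        have hgxs : grad f xs i = 0 := by rw [hmain i, hlam0, hmu0]; ring
        refine ⟨{x | l i + ε * grad f x i < x i} ∩ {x | x i < u i + ε * grad f x i},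
          ?_, ?_, ?_⟩
        · exact (isOpen_lt (continuous_const.add (continuous_const.mul (hg i)))
            (continuous_apply i)).inter
            (isOpen_lt (continuous_apply i)
              (continuous_const.add (continuous_const.mul (hg i))))
        · constructor
          · show l i + ε * grad f xs i < xs i
            rw [hgxs]; simpa using hl
          · show xs i < u i + ε * grad f xs i
            rw [hgxs]; simpa using hu
        · rintro x ⟨hx1, hx2⟩ hxl hxu
          exact ⟨fun h => absurd h.2 (by rw [hlam0]; exact lt_irrefl 0),
            fun h => absurd h (notAl x i hx1),
            fun h => absurd h.2 (by rw [hmu0]; exact lt_irrefl 0),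
            fun h => absurd h (notAu x i hx2)⟩
  choose S hSopen hSmem hSprop using key
  have hopen : IsOpen (⋂ i, S i) := isOpen_iInter_of_finite hSopen
  have hxsmem : xs ∈ ⋂ i, S i := Set.mem_iInter.mpr hSmem
  obtain ⟨ρ, hρ, hball⟩ := Metric.isOpen_iff.mp hopen xs hxsmem
  refine ⟨ρ, hρ, ?_⟩
  intro x hx hdist
  have hxS : x ∈ ⋂ i, S i := by
    apply hball
    have hle : dist x xs ≤ Real.sqrt (∑ i, (x i - xs i) ^ 2) := by
      rw [dist_pi_le_iff (Real.sqrt_nonneg _)]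
      intro i
      rw [Real.dist_eq, ← Real.sqrt_sq_eq_abs]
      exact Real.sqrt_le_sqrt
        (Finset.single_le_sum (f := fun j => (x j - xs j) ^ 2) (fun j _ => sq_nonneg _) (Finset.mem_univ i))
    exact Metric.mem_ball.mpr (lt_of_le_of_lt hle hdist)
  have hP : ∀ i, (xs i = l i ∧ 0 < lam i → i ∈ estAl f l u ε x) ∧
      (i ∈ estAl f l u ε x → xs i = l i) ∧
      (xs i = u i ∧ 0 < mu i → i ∈ estAu f l u ε x) ∧
      (i ∈ estAu f l u ε x → xs i = u i) :=
    fun i => hSprop i x (Set.mem_iInter.mp hxS i) (hx i).1 (hx i).2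
  exact ⟨⟨fun i hi => (hP i).1 hi, fun i hi => (hP i).2.1 hi⟩,
    ⟨fun i hi => (hP i).2.2.1 hi, fun i hi => (hP i).2.2.2 hi⟩⟩
end

section
/- Let (x*, λ*, μ*) satisfy the KKT conditions for min f(x) subject to l ≤ x ≤ u, and assume strict complementarity holds, i.e. λ*_i > 0 whenever x*_i = l_i and μ*_i > 0 whenever x*_i = u_i. Then there exists ρ > 0 such that for every x ∈ [l,u] with ‖x − x*‖ < ρ one has A_l(x) = {i : x*_i = l_i} and A_u(x) = {i : x*_i = u_i}. -/
open Finset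

/-- under strict complementarity, near a KKT point the active-set estimates
identify exactly the active constraints. -/
theorem active_set_exact_identification {n : ℕ} (f : (Fin n → ℝ) → ℝ) (hf : ContDiff ℝ 2 f)
    (l u : Fin n → ℝ) (hlu : ∀ i, l i < u i) (ε : ℝ) (hε : 0 < ε)
    (xs lam mu : Fin n → ℝ)
    (hfeas : ∀ i, l i ≤ xs i ∧ xs i ≤ u i)
    (hkkt1 : ∀ i, grad f xs i - lam i + mu i = 0)
    (hkkt2 : ∀ i, (l i - xs i) * lam i = 0)
    (hkkt3 : ∀ i, (xs i - u i) * mu i = 0)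
    (hkkt4 : ∀ i, 0 ≤ lam i ∧ 0 ≤ mu i)
    (hsc : ∀ i, (xs i = l i → 0 < lam i) ∧ (xs i = u i → 0 < mu i)) :
    ∃ ρ > (0 : ℝ), ∀ x : Fin n → ℝ, (∀ i, l i ≤ x i ∧ x i ≤ u i) →
      Real.sqrt (∑ i, (x i - xs i) ^ 2) < ρ →
      estAl f l u ε x = {i | xs i = l i} ∧
      estAu f l u ε x = {i | xs i = u i} := by

  have hgc : ∀ i : Fin n, Continuous fun x => grad f x i := by
    intro i
    exact (hf.continuous_fderiv (by norm_num)).clm_apply continuous_const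
  have hden : ∀ (x : Fin n → ℝ) (i : Fin n), 0 < (l i - x i) ^ 2 + (u i - x i) ^ 2 := by
    intro x i
    rcases eq_or_ne (x i) (l i) with h | h
    · have h2 : u i - x i ≠ 0 := by have := hlu i; intro hc; rw [h] at hc; linarith
      positivity
    · have h2 : l i - x i ≠ 0 := fun hc => h (by linarith)
      positivity
  have hlamc : ∀ i : Fin n, Continuous fun x => lamMul f l u x i := by
    intro i
    unfold lamMul
    exact (((continuous_const.sub (continuous_apply i)).pow 2).div
      ((((continuous_const.sub (continuous_apply i)).pow 2)).add
        (((continuous_const.sub (continuous_apply i)).pow 2)))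
      (fun x => (hden x i).ne')).mul (hgc i)
  have hmuc : ∀ i : Fin n, Continuous fun x => muMul f l u x i := by
    intro i
    unfold muMul
    exact ((((continuous_const.sub (continuous_apply i)).pow 2).div
      ((((continuous_const.sub (continuous_apply i)).pow 2)).add
        (((continuous_const.sub (continuous_apply i)).pow 2)))
      (fun x => (hden x i).ne')).mul (hgc i)).neg
  have key : ∀ i : Fin n, ∀ᶠ x in nhds xs,
      (l i ≤ x i ∧ x i ≤ u i) →
        ((i ∈ estAl f l u ε x ↔ xs i = l i) ∧ (i ∈ estAu f l u ε x ↔ xs i = u i)) := by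
    intro i
    rcases eq_or_lt_of_le (hfeas i).1 with hl | hl
    · -- xs i = l i
      have hxl : xs i = l i := hl.symm
      have hxu : xs i ≠ u i := by have := hlu i; rw [hxl]; exact ne_of_lt this
      have hmu0 : mu i = 0 := by
        have h3 := hkkt3 i
        have hne : xs i - u i ≠ 0 := sub_ne_zero.mpr hxu
        exact (mul_eq_zero.mp h3).resolve_left hne
      have hlam : 0 < lam i := (hsc i).1 hxl
      have hgpos : 0 < grad f xs i := by have := hkkt1 i; rw [hmu0] at this; linarith
      have hlamxs : lamMul f l u xs i = grad f xs i := by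
        unfold lamMul
        rw [hxl]
        have h2 : (u i - l i) ^ 2 ≠ 0 := by
          have := hlu i
          have : u i - l i ≠ 0 := by intro hc; linarith
          positivity
        field_simp
        ring
      have h1 : ∀ᶠ x in nhds xs, x i < l i + ε * lamMul f l u x i := by
        have hc1 : Continuous fun x : Fin n → ℝ => x i := continuous_apply i
        have hc2 : Continuous fun x : Fin n → ℝ => l i + ε * lamMul f l u x i :=
          continuous_const.add (continuous_const.mul (hlamc i))
        apply hc1.continuousAt.eventually_lt hc2.continuousAt
        show xs i < l i + ε * lamMul f l u xs i
        rw [hxl, hlamxs]; nlinarith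
      have h2 : ∀ᶠ x in nhds xs, 0 < grad f x i := by
        have := (hgc i).continuousAt (x := xs)
        exact continuousAt_const.eventually_lt (hgc i).continuousAt hgpos
      filter_upwards [h1, h2] with x hx1 hx2 hfx
      refine ⟨⟨fun _ => hxl, fun _ => ⟨hfx.1, hx1.le, hx2⟩⟩, ?_⟩
      constructor
      · intro hmem; exact absurd hmem.2.2 (not_lt.mpr hx2.le)
      · intro h; exact absurd h hxu
    · rcases eq_or_lt_of_le (hfeas i).2 with hu | hu
      · -- xs i = u i
        have hxl : xs i ≠ l i := by intro h; rw [h] at hl; exact lt_irrefl _ hl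
        have hlam0 : lam i = 0 := by
          have h2 := hkkt2 i
          have hne : l i - xs i ≠ 0 := by intro hc; exact hxl (by linarith)
          exact (mul_eq_zero.mp h2).resolve_left hne
        have hmu : 0 < mu i := (hsc i).2 hu
        have hgneg : grad f xs i < 0 := by have := hkkt1 i; rw [hlam0] at this; linarith
        have hmuxs : muMul f l u xs i = -grad f xs i := by
          unfold muMul
          rw [hu]
          have h2 : (l i - u i) ^ 2 ≠ 0 := by
            have := hlu i
            have : l i - u i ≠ 0 := by intro hc; linarith
            positivity
          field_simp
          ring
        have h1 : ∀ᶠ x in nhds xs, u i - ε * muMul f l u x i < x i := by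
          have hc1 : Continuous fun x : Fin n → ℝ => x i := continuous_apply i
          have hc2 : Continuous fun x : Fin n → ℝ => u i - ε * muMul f l u x i :=
            continuous_const.sub (continuous_const.mul (hmuc i))
          apply hc2.continuousAt.eventually_lt hc1.continuousAt
          show u i - ε * muMul f l u xs i < xs i
          rw [hu, hmuxs]; nlinarith
        have h2 : ∀ᶠ x in nhds xs, grad f x i < 0 :=
          (hgc i).continuousAt.eventually_lt continuousAt_const hgneg
        filter_upwards [h1, h2] with x hx1 hx2 hfx
        refine ⟨?_, ⟨fun _ => hu, fun _ => ⟨hx1.le, hfx.2, hx2⟩⟩⟩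
        constructor
        · intro hmem; exact absurd hmem.2.2 (not_lt.mpr hx2.le)
        · intro h; exact absurd h hxl
      · -- interior
        have hxl : xs i ≠ l i := by intro h; rw [h] at hl; exact lt_irrefl _ hl
        have hxu : xs i ≠ u i := ne_of_lt hu
        have hlam0 : lam i = 0 := by
          have h2 := hkkt2 i
          have hne : l i - xs i ≠ 0 := by intro hc; exact hxl (by linarith)
          exact (mul_eq_zero.mp h2).resolve_left hne
        have hmu0 : mu i = 0 := by
          have h3 := hkkt3 i
          have hne : xs i - u i ≠ 0 := sub_ne_zero.mpr hxu
          exact (mul_eq_zero.mp h3).resolve_left hne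
        have hg0 : grad f xs i = 0 := by have := hkkt1 i; rw [hlam0, hmu0] at this; linarith
        have hlamxs : lamMul f l u xs i = 0 := by unfold lamMul; rw [hg0]; ring
        have hmuxs : muMul f l u xs i = 0 := by unfold muMul; rw [hg0]; ring
        have h1 : ∀ᶠ x in nhds xs, l i + ε * lamMul f l u x i < x i := by
          have hc1 : Continuous fun x : Fin n → ℝ => x i := continuous_apply i
          have hc2 : Continuous fun x : Fin n → ℝ => l i + ε * lamMul f l u x i :=
            continuous_const.add (continuous_const.mul (hlamc i))
          apply hc2.continuousAt.eventually_lt hc1.continuousAt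
          show l i + ε * lamMul f l u xs i < xs i
          rw [hlamxs]; linarith
        have h2 : ∀ᶠ x in nhds xs, x i < u i - ε * muMul f l u x i := by
          have hc1 : Continuous fun x : Fin n → ℝ => x i := continuous_apply i
          have hc2 : Continuous fun x : Fin n → ℝ => u i - ε * muMul f l u x i :=
            continuous_const.sub (continuous_const.mul (hmuc i))
          apply hc1.continuousAt.eventually_lt hc2.continuousAt
          show xs i < u i - ε * muMul f l u xs i
          rw [hmuxs]; linarith
        filter_upwards [h1, h2] with x hx1 hx2 hfx
        constructor
        · constructor
          · intro hmem; exact absurd hmem.2.1 (not_le.mpr hx1)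
          · intro h; exact absurd h hxl
        · constructor
          · intro hmem; exact absurd hmem.1 (not_le.mpr hx2)
          · intro h; exact absurd h hxu
  have hall := Filter.eventually_all.mpr key
  rw [Metric.eventually_nhds_iff] at hall
  obtain ⟨ρ, hρ, hball⟩ := hall
  refine ⟨ρ, hρ, fun x hx hdist => ?_⟩
  have hd : dist x xs < ρ := by
    rw [dist_pi_lt_iff hρ]
    intro i
    have hle : |x i - xs i| ≤ Real.sqrt (∑ j, (x j - xs j) ^ 2) := by
      rw [← Real.sqrt_sq_eq_abs]
      exact Real.sqrt_le_sqrt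
        (Finset.single_le_sum (fun j _ => sq_nonneg (x j - xs j)) (Finset.mem_univ i))
    calc dist (x i) (xs i) = |x i - xs i| := Real.dist_eq _ _
      _ ≤ _ := hle
      _ < ρ := hdist
  have hthis := hball hd
  constructor
  · ext i; exact (hthis i (hx i)).1
  · ext i; exact (hthis i (hx i)).2
end

section
/- A point x̄ ∈ [l,u] is a stationary point of min f(x) subject to l ≤ x ≤ u if and only if the following conditions hold: max{l_i − x̄_i, −g_i(x̄)} = 0 for all i ∈ A_l(x̄); max{x̄_i − u_i, g_i(x̄)} = 0 for all i ∈ A_u(x̄); and g_i(x̄) = 0 for all i ∈ N(x̄). -/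
open Finset

/-- First-order optimality (stationarity) conditions at a feasible point. -/
def IsBoxStationary {n : ℕ} (f : (Fin n → ℝ) → ℝ) (l u x : Fin n → ℝ) : Prop :=
  ∀ i, (x i = l i → 0 ≤ grad f x i) ∧ (x i = u i → grad f x i ≤ 0) ∧
    (l i < x i → x i < u i → grad f x i = 0)

/-- characterization of stationary points via the active-set estimates. -/
theorem stationarity_characterization {n : ℕ} (f : (Fin n → ℝ) → ℝ) (hf : ContDiff ℝ 2 f)
    (l u : Fin n → ℝ) (hlu : ∀ i, l i < u i) (ε : ℝ) (hε : 0 < ε)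
    (x : Fin n → ℝ) (hx : ∀ i, l i ≤ x i ∧ x i ≤ u i) :
    IsBoxStationary f l u x ↔
      ((∀ i ∈ estAl f l u ε x, max (l i - x i) (-(grad f x i)) = 0) ∧
       (∀ i ∈ estAu f l u ε x, max (x i - u i) (grad f x i) = 0) ∧
       (∀ i ∈ estN f l u ε x, grad f x i = 0)) := by
  have hden : ∀ i : Fin n, 0 < (l i - x i) ^ 2 + (u i - x i) ^ 2 := by
    intro i
    nlinarith [sq_nonneg (l i - x i), sq_nonneg (u i - x i),
      sq_nonneg (l i + u i - 2 * x i), hlu i]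
  constructor
  · intro hst
    refine ⟨?_, ?_, ?_⟩
    · rintro i ⟨hl, hle, hg⟩
      have hxl : x i = l i := by
        rcases eq_or_lt_of_le (hx i).2 with h | h
        · linarith [(hst i).2.1 h]
        rcases eq_or_lt_of_le hl with h' | h'
        · exact h'.symm
        · linarith [(hst i).2.2 h' h]
      rw [hxl, sub_self]
      exact max_eq_left (by linarith)
    · rintro i ⟨hle, hu, hg⟩
      have hxu : x i = u i := by
        rcases eq_or_lt_of_le (hx i).1 with h | h
        · linarith [(hst i).1 h.symm]
        rcases eq_or_lt_of_le hu with h' | h'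
        · exact h'
        · linarith [(hst i).2.2 h h']
      rw [hxu, sub_self]
      exact max_eq_left hg.le
    · rintro i ⟨hAl, hAu⟩
      rcases eq_or_lt_of_le (hx i).1 with h | h
      · have hg0 : 0 ≤ grad f x i := (hst i).1 h.symm
        by_contra hne
        have hg : 0 < grad f x i := lt_of_le_of_ne hg0 (Ne.symm hne)
        apply hAl
        refine ⟨h.le, ?_, hg⟩
        have hlam : 0 ≤ lamMul f l u x i := by
          unfold lamMul
          exact mul_nonneg (div_nonneg (sq_nonneg _) (hden i).le) hg.le
        nlinarith [mul_nonneg hε.le hlam]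
      rcases eq_or_lt_of_le (hx i).2 with h' | h'
      · have hg0 : grad f x i ≤ 0 := (hst i).2.1 h'
        by_contra hne
        have hg : grad f x i < 0 := lt_of_le_of_ne hg0 hne
        apply hAu
        refine ⟨?_, h'.le, hg⟩
        have hmu : 0 ≤ muMul f l u x i := by
          unfold muMul
          have := mul_nonpos_of_nonneg_of_nonpos
            (div_nonneg (sq_nonneg (l i - x i)) (hden i).le) hg.le
          linarith
        nlinarith [mul_nonneg hε.le hmu]
      · exact (hst i).2.2 h h'
  · rintro ⟨h1, h2, h3⟩ i
    by_cases hAl : i ∈ estAl f l u ε x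
    · have hm := h1 i hAl
      obtain ⟨_, _, hg⟩ := hAl
      have hxl : x i = l i := by
        rcases max_choice (l i - x i) (-(grad f x i)) with h | h
        · rw [h] at hm; linarith
        · rw [h] at hm; linarith
      refine ⟨fun _ => hg.le, fun h => ?_, fun h _ => ?_⟩
      · exfalso; linarith [hlu i]
      · exfalso; linarith
    by_cases hAu : i ∈ estAu f l u ε x
    · have hm := h2 i hAu
      obtain ⟨_, _, hg⟩ := hAu
      have hxu : x i = u i := by
        rcases max_choice (x i - u i) (grad f x i) with h | h
        · rw [h] at hm; linarith
        · rw [h] at hm; linarith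
      refine ⟨fun h => ?_, fun _ => hg.le, fun _ h => ?_⟩
      · exfalso; linarith [hlu i]
      · exfalso; linarith
    · have hg0 : grad f x i = 0 := h3 i ⟨hAl, hAu⟩
      exact ⟨fun _ => hg0.ge, fun _ => hg0.le, fun _ _ => hg0⟩
end

section
/- Let x̄ ∈ [l,u] and assume that {i ∈ A_l(x̄) : x̄_i > l_i} ∪ {i ∈ A_u(x̄) : x̄_i < u_i} = ∅. Then x̄ is a stationary point of min f(x) subject to l ≤ x ≤ u if and only if g_i(x̄) = 0 for all i ∈ N(x̄). -/
open Finset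

/-- if no estimated active variable is strictly inside its bound, then
stationarity is equivalent to the vanishing of the gradient on the non-active estimate. -/
theorem stationarity_iff_free_gradient_zero {n : ℕ} (f : (Fin n → ℝ) → ℝ)
    (hf : ContDiff ℝ 2 f) (l u : Fin n → ℝ) (hlu : ∀ i, l i < u i) (ε : ℝ) (hε : 0 < ε)
    (x : Fin n → ℝ) (hx : ∀ i, l i ≤ x i ∧ x i ≤ u i)
    (hempty : {i | i ∈ estAl f l u ε x ∧ l i < x i} ∪
      {i | i ∈ estAu f l u ε x ∧ x i < u i} = ∅) :
    IsBoxStationary f l u x ↔ ∀ i ∈ estN f l u ε x, grad f x i = 0 := by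
  have hemp : ∀ i, (i ∈ estAl f l u ε x → x i = l i) ∧ (i ∈ estAu f l u ε x → x i = u i) := by
    intro i
    have h := Set.eq_empty_iff_forall_notMem.mp hempty i
    rw [Set.mem_union] at h
    push_neg at h
    constructor
    · intro hi
      by_contra hne
      exact h.1 ⟨hi, lt_of_le_of_ne hi.1 (Ne.symm hne)⟩
    · intro hi
      by_contra hne
      exact h.2 ⟨hi, lt_of_le_of_ne hi.2.1 hne⟩
  constructor
  · intro hs i hiN
    obtain ⟨h1, h2, h3⟩ := hs i
    rcases eq_or_lt_of_le (hx i).1 with hl | hl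
    · have hg := h1 hl.symm
      rcases lt_or_eq_of_le hg with hg' | hg'
      · exfalso
        apply hiN.1
        have hupos : (0:ℝ) < (u i - x i)^2 := by
          have := hlu i; nlinarith
        have hden : (l i - x i)^2 + (u i - x i)^2 = (u i - x i)^2 := by
          rw [← hl]; ring
        have hlam : lamMul f l u x i = grad f x i := by
          unfold lamMul; rw [hden, div_self (ne_of_gt hupos), one_mul]
        refine ⟨(hx i).1, ?_, hg'⟩
        rw [hlam, ← hl]
        nlinarith
      · exact hg'.symm
    · rcases eq_or_lt_of_le (hx i).2 with hu | hu
      · have hg := h2 hu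
        rcases lt_or_eq_of_le hg with hg' | hg'
        · exfalso
          apply hiN.2
          have hlpos : (0:ℝ) < (l i - x i)^2 := by
            have := hlu i; nlinarith
          have hden : (l i - x i)^2 + (u i - x i)^2 = (l i - x i)^2 := by
            rw [hu]; ring
          have hmu : muMul f l u x i = -grad f x i := by
            unfold muMul; rw [hden, div_self (ne_of_gt hlpos), one_mul]
          refine ⟨?_, (hx i).2, hg'⟩
          rw [hmu, hu]
          nlinarith
        · exact hg'
      · exact h3 hl hu
  · intro hN i
    by_cases hAl : i ∈ estAl f l u ε x
    · have hxe := (hemp i).1 hAl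
      have hg := hAl.2.2
      refine ⟨fun _ => le_of_lt hg, fun h => absurd (hlu i) ?_, fun h1 _ => absurd hxe ?_⟩
      · rw [← hxe, h]; exact lt_irrefl _
      · exact ne_of_gt h1
    · by_cases hAu : i ∈ estAu f l u ε x
      · have hxe := (hemp i).2 hAu
        have hg := hAu.2.2
        refine ⟨fun h => absurd (hlu i) ?_, fun _ => le_of_lt hg, fun _ h2 => absurd hxe ?_⟩
        · rw [← hxe, h]; exact lt_irrefl _
        · exact ne_of_lt h2
      · have hz := hN i ⟨hAl, hAu⟩
        exact ⟨fun _ => le_of_eq hz.symm, fun _ => le_of_eq hz, fun _ _ => hz⟩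
end

section
/- Let x̄ ∈ [l,u] and assume that g_i(x̄) = 0 for all i ∈ N(x̄). Then x̄ is a stationary point of min f(x) subject to l ≤ x ≤ u if and only if {i ∈ A_l(x̄) : x̄_i > l_i} ∪ {i ∈ A_u(x̄) : x̄_i < u_i} = ∅. -/
open Finset

/-- if the gradient vanishes on the non-active estimate, then stationarity
is equivalent to no estimated active variable being strictly inside its bound. -/
theorem stationarity_iff_active_at_bounds {n : ℕ} (f : (Fin n → ℝ) → ℝ)
    (hf : ContDiff ℝ 2 f) (l u : Fin n → ℝ) (hlu : ∀ i, l i < u i) (ε : ℝ) (hε : 0 < ε)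
    (x : Fin n → ℝ) (hx : ∀ i, l i ≤ x i ∧ x i ≤ u i)
    (hfree : ∀ i ∈ estN f l u ε x, grad f x i = 0) :
    IsBoxStationary f l u x ↔
      {i | i ∈ estAl f l u ε x ∧ l i < x i} ∪
        {i | i ∈ estAu f l u ε x ∧ x i < u i} = ∅ := by
  constructor
  · intro hs
    apply Set.eq_empty_iff_forall_notMem.mpr
    intro i hi
    rcases hi with ⟨⟨hl, hle, hg⟩, hlx⟩ | ⟨⟨hge, hle, hg⟩, hxu⟩
    · rcases lt_or_eq_of_le (hx i).2 with h | h
      · exact absurd ((hs i).2.2 hlx h) (ne_of_gt hg)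
      · exact absurd ((hs i).2.1 h) (not_le.mpr hg)
    · rcases lt_or_eq_of_le (hx i).1 with h | h
      · exact absurd ((hs i).2.2 h hxu) (ne_of_lt hg)
      · exact absurd ((hs i).1 h.symm) (not_le.mpr hg)
  · intro hempty
    have hnot : ∀ j, ¬ ((j ∈ estAl f l u ε x ∧ l j < x j) ∨
        (j ∈ estAu f l u ε x ∧ x j < u j)) := by
      intro j hj
      have : j ∈ ({i | i ∈ estAl f l u ε x ∧ l i < x i} ∪
          {i | i ∈ estAu f l u ε x ∧ x i < u i}) := hj
      rw [hempty] at this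
      exact this
    intro i
    refine ⟨?_, ?_, ?_⟩
    · intro hxl
      by_contra hg
      push_neg at hg
      have hN : i ∈ estN f l u ε x := by
        refine ⟨?_, ?_⟩
        · rintro ⟨_, _, hpos⟩
          exact absurd hpos (not_lt.mpr hg.le)
        · rintro ⟨hμ, _, _⟩
          have hμ0 : muMul f l u x i = 0 := by
            simp [muMul, hxl]
          rw [hμ0, mul_zero, sub_zero] at hμ
          exact absurd (hμ.trans_eq hxl) (not_le.mpr (hlu i))
      exact hg.ne (hfree i hN)
    · intro hxu
      by_contra hg
      push_neg at hg
      have hN : i ∈ estN f l u ε x := by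
        refine ⟨?_, ?_⟩
        · rintro ⟨_, hle, _⟩
          have hlam0 : lamMul f l u x i = 0 := by
            simp [lamMul, hxu]
          rw [hlam0, mul_zero, add_zero] at hle
          rw [hxu] at hle; exact absurd hle (not_le.mpr (hlu i))
        · rintro ⟨_, _, hneg⟩
          exact absurd hneg (not_lt.mpr hg.le)
      exact hg.ne' (hfree i hN)
    · intro hlx hxu
      by_cases hAl : i ∈ estAl f l u ε x
      · exact absurd (Or.inl ⟨hAl, hlx⟩) (hnot i)
      · by_cases hAu : i ∈ estAu f l u ε x
        · exact absurd (Or.inr ⟨hAu, hxu⟩) (hnot i)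
        · exact hfree i ⟨hAl, hAu⟩
end

section
/- Assume the parameter ε > 0 satisfies ε·vᵀH(z)v ≤ ‖v‖² for every z ∈ [l,u] and every v ∈ ℝⁿ (i.e. ε ≤ 1/λ̄ where λ̄ = max_{z∈[l,u]} λ_max(H(z)) when λ̄ > 0, and ε > 0 arbitrary otherwise). Let x ∈ [l,u] with A_l(x) ∪ A_u(x) ≠ ∅, and define x̃ by x̃_i := l_i for i ∈ A_l(x), x̃_i := u_i for i ∈ A_u(x), and x̃_i := x_i for i ∈ N(x). Then f(x̃) − f(x) ≤ −(1/(2ε))·‖x − x̃‖². -/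
open Finset

/-- setting the estimated active variables to their bounds yields a
sufficient decrease of the objective function. -/
theorem active_set_descent {n : ℕ} (f : (Fin n → ℝ) → ℝ) (hf : ContDiff ℝ 2 f)
    (l u : Fin n → ℝ) (hlu : ∀ i, l i < u i) (ε : ℝ) (hε : 0 < ε)
    (hH : ∀ z : Fin n → ℝ, (∀ i, l i ≤ z i ∧ z i ≤ u i) →
      ∀ v : Fin n → ℝ, ε * iteratedFDeriv ℝ 2 f z ![v, v] ≤ ∑ i, v i ^ 2)
    (x : Fin n → ℝ) (hx : ∀ i, l i ≤ x i ∧ x i ≤ u i)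
    (hne : (estAl f l u ε x ∪ estAu f l u ε x).Nonempty)
    (xt : Fin n → ℝ)
    (hxt1 : ∀ i ∈ estAl f l u ε x, xt i = l i)
    (hxt2 : ∀ i ∈ estAu f l u ε x, xt i = u i)
    (hxt3 : ∀ i ∈ estN f l u ε x, xt i = x i) :
    f xt - f x ≤ -(1 / (2 * ε)) * ∑ i, (x i - xt i) ^ 2 := by
  classical
  have hεne : ε ≠ 0 := ne_of_gt hε
  set d : Fin n → ℝ := fun i => xt i - x i with hd
  set γ : ℝ → (Fin n → ℝ) := fun t => x + t • d with hγdef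
  -- basic differentiability facts
  have hfd : Differentiable ℝ f := hf.differentiable (by norm_num)
  have hC1 : ContDiff ℝ 1 (fderiv ℝ f) :=
    (contDiff_succ_iff_fderiv.mp (show ContDiff ℝ (1 + 1) f by exact_mod_cast hf)).2.2
  have h2 : Differentiable ℝ (fderiv ℝ f) := hC1.differentiable one_ne_zero
  have hγ : ∀ t : ℝ, HasDerivAt γ d t := by
    intro t
    simpa [hγdef] using (((hasDerivAt_id t).smul_const d).const_add x)
  have hg1 : ∀ t : ℝ, HasDerivAt (fun s => f (γ s)) (fderiv ℝ f (γ t) d) t := by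
    intro t
    exact (hfd (γ t)).hasFDerivAt.comp_hasDerivAt t (hγ t)
  have hg2 : ∀ t : ℝ, HasDerivAt (fun s => fderiv ℝ f (γ s) d)
      (fderiv ℝ (fderiv ℝ f) (γ t) d d) t := by
    intro t
    have h := (((h2 (γ t)).hasFDerivAt.comp_hasDerivAt t (hγ t)).clm_apply
      (hasDerivAt_const t d))
    simpa using h
  -- the quadratic sum
  set Q : ℝ := ∑ i, d i ^ 2 with hQ
  have hQ0 : 0 ≤ Q := Finset.sum_nonneg fun i _ => sq_nonneg _
  -- xt lies in the box
  have hxtb : ∀ i, l i ≤ xt i ∧ xt i ≤ u i := by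
    intro i
    by_cases h1 : i ∈ estAl f l u ε x
    · rw [hxt1 i h1]; exact ⟨le_refl _, (hlu i).le⟩
    · by_cases h2' : i ∈ estAu f l u ε x
      · rw [hxt2 i h2']; exact ⟨(hlu i).le, le_refl _⟩
      · rw [hxt3 i ⟨h1, h2'⟩]; exact hx i
  -- γ t lies in the box for t ∈ [0,1]
  have hbox : ∀ t ∈ Set.Icc (0:ℝ) 1, ∀ i, l i ≤ γ t i ∧ γ t i ≤ u i := by
    intro t ht i
    have h1 := hx i; have h2' := hxtb i
    have : γ t i = (1 - t) * x i + t * xt i := by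
      simp [hγdef, hd]; ring
    rw [this]
    constructor
    · nlinarith [ht.1, ht.2, h1.1, h2'.1]
    · nlinarith [ht.1, ht.2, h1.2, h2'.2]
  -- Hessian bound along the segment
  have hB : ∀ t ∈ Set.Icc (0:ℝ) 1, fderiv ℝ (fderiv ℝ f) (γ t) d d ≤ Q / ε := by
    intro t ht
    have h := hH (γ t) (hbox t ht) d
    rw [iteratedFDeriv_two_apply] at h
    simp only [Matrix.cons_val_zero, Matrix.cons_val_one, Matrix.head_cons] at h
    rw [le_div_iff₀ hε]
    linarith [h]
  -- gradient at x applied to d, as a sum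
  have hrepr : (d : Fin n → ℝ) = ∑ i, d i • (Pi.single i 1 : Fin n → ℝ) := by
    funext j
    simp [Finset.sum_apply, Pi.single_apply]
  have hsum : fderiv ℝ f x d = ∑ i, d i * grad f x i := by
    conv_lhs => rw [hrepr]
    rw [map_sum]
    simp [grad, smul_eq_mul]
  -- componentwise key inequality
  have hkey : ∀ i, ε * (d i * grad f x i) ≤ -(d i ^ 2) := by
    intro i
    have hden : 0 < (l i - x i) ^ 2 + (u i - x i) ^ 2 := by
      nlinarith [sq_nonneg (u i + l i - 2 * x i), hlu i,
        mul_pos (sub_pos.2 (hlu i)) (sub_pos.2 (hlu i))]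
    by_cases h1 : i ∈ estAl f l u ε x
    · have hdi : d i = l i - x i := by rw [hd]; simp [hxt1 i h1]
      obtain ⟨hli, hup, hg⟩ := h1
      have hc : (u i - x i) ^ 2 / ((l i - x i) ^ 2 + (u i - x i) ^ 2) ≤ 1 := by
        rw [div_le_one hden]; nlinarith [sq_nonneg (l i - x i)]
      have hlam : lamMul f l u x i ≤ grad f x i := by
        rw [lamMul]
        calc (u i - x i) ^ 2 / ((l i - x i) ^ 2 + (u i - x i) ^ 2) * grad f x i
            ≤ 1 * grad f x i := by
              apply mul_le_mul_of_nonneg_right hc hg.le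
          _ = grad f x i := one_mul _
      have h3 : x i - l i ≤ ε * grad f x i := by
        have := mul_le_mul_of_nonneg_left hlam hε.le
        linarith
      rw [hdi]
      nlinarith [hli, h3]
    · by_cases h2' : i ∈ estAu f l u ε x
      · have hdi : d i = u i - x i := by rw [hd]; simp [hxt2 i h2']
        obtain ⟨hlo, hui, hg⟩ := h2'
        have hc : (l i - x i) ^ 2 / ((l i - x i) ^ 2 + (u i - x i) ^ 2) ≤ 1 := by
          rw [div_le_one hden]; nlinarith [sq_nonneg (u i - x i)]
        have hmu : muMul f l u x i ≤ -grad f x i := by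
          rw [muMul]
          have : (l i - x i) ^ 2 / ((l i - x i) ^ 2 + (u i - x i) ^ 2) * (-grad f x i)
              ≤ 1 * (-grad f x i) := by
            apply mul_le_mul_of_nonneg_right hc (by linarith)
          linarith [this]
        have h3 : u i - x i ≤ ε * (-grad f x i) := by
          have := mul_le_mul_of_nonneg_left hmu hε.le
          linarith
        rw [hdi]
        nlinarith [hui, h3]
      · have hdi : d i = 0 := by rw [hd]; simp [hxt3 i ⟨h1, h2'⟩]
        simp [hdi]
  -- sum it
  have hG : ε * fderiv ℝ f x d ≤ -Q := by
    rw [hsum, Finset.mul_sum, hQ, ← Finset.sum_neg_distrib]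
    exact Finset.sum_le_sum fun i _ => hkey i
  -- derivative setup for ψ₁ and ψ
  set G : ℝ := fderiv ℝ f x d with hGdef
  set ψ₁ : ℝ → ℝ := fun t => fderiv ℝ f (γ t) d - G - t * (Q / ε) with hψ₁def
  set ψ : ℝ → ℝ := fun t => f (γ t) - f x - t * G - t ^ 2 * (Q / (2 * ε)) with hψdef
  have hψ₁d : ∀ t : ℝ, HasDerivAt ψ₁ (fderiv ℝ (fderiv ℝ f) (γ t) d d - Q / ε) t := by
    intro t
    have h := ((hg2 t).sub_const G).sub ((hasDerivAt_id t).mul_const (Q / ε))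
    simp only [one_mul] at h
    exact h
  have hψd : ∀ t : ℝ, HasDerivAt ψ (ψ₁ t) t := by
    intro t
    have h := (((hg1 t).sub_const (f x)).sub ((hasDerivAt_id t).mul_const G)).sub
      ((hasDerivAt_pow 2 t).mul_const (Q / (2 * ε)))
    refine HasDerivAt.congr_deriv h ?_
    show _ = fderiv ℝ f (γ t) d - G - t * (Q / ε)
    field_simp
    ring
  have hγ0 : γ 0 = x := by simp [hγdef]
  have hγ1 : γ 1 = xt := by
    funext i; simp [hγdef, hd]
  -- ψ₁ ≤ 0 on [0,1]
  have hψ₁anti : AntitoneOn ψ₁ (Set.Icc 0 1) := by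
    apply antitoneOn_of_deriv_nonpos (convex_Icc 0 1)
    · exact fun t _ => (hψ₁d t).continuousAt.continuousWithinAt
    · exact fun t _ => (hψ₁d t).differentiableAt.differentiableWithinAt
    · intro t ht
      rw [interior_Icc] at ht
      rw [(hψ₁d t).deriv]
      have := hB t ⟨ht.1.le, ht.2.le⟩
      linarith
  have hψ₁0 : ψ₁ 0 = 0 := by simp [hψ₁def, hγ0, hGdef]
  have hψ₁le : ∀ t ∈ Set.Icc (0:ℝ) 1, ψ₁ t ≤ 0 := by
    intro t ht
    have := hψ₁anti (Set.left_mem_Icc.2 zero_le_one) ht ht.1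
    rw [hψ₁0] at this
    exact this
  -- ψ is antitone on [0,1]
  have hψanti : AntitoneOn ψ (Set.Icc 0 1) := by
    apply antitoneOn_of_deriv_nonpos (convex_Icc 0 1)
    · exact fun t _ => (hψd t).continuousAt.continuousWithinAt
    · exact fun t _ => (hψd t).differentiableAt.differentiableWithinAt
    · intro t ht
      rw [interior_Icc] at ht
      rw [(hψd t).deriv]
      exact hψ₁le t ⟨ht.1.le, ht.2.le⟩
  have hψ0 : ψ 0 = 0 := by simp [hψdef, hγ0]
  have hψ1 : ψ 1 ≤ 0 := by
    have := hψanti (Set.left_mem_Icc.2 zero_le_one) (Set.right_mem_Icc.2 zero_le_one)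
      zero_le_one
    rw [hψ0] at this
    exact this
  have hfin : f xt - f x ≤ G + Q / (2 * ε) := by
    have : ψ 1 = f xt - f x - G - Q / (2 * ε) := by
      simp [hψdef, hγ1]
    linarith [hψ1, this ▸ hψ1]
  have hGle : G ≤ -Q / ε := by
    rw [le_div_iff₀ hε]
    nlinarith [hG]
  have hQeq : ∑ i, (x i - xt i) ^ 2 = Q := by
    rw [hQ]
    apply Finset.sum_congr rfl
    intro i _
    rw [hd]; ring
  rw [hQeq]
  have : -Q / ε + Q / (2 * ε) = -(1 / (2 * ε)) * Q := by
    field_simp; ring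
  linarith [hfin, hGle, this ▸ le_refl (-Q / ε + Q / (2 * ε))]
end

section
/- Let x̄ ∈ [l,u] with N(x̄) ≠ ∅ and g_{N(x̄)}(x̄) ≠ 0, let γ ∈ (0,1), σ₁ > 0, σ₂ > 0, and let d ∈ ℝⁿ satisfy d_i = 0 for all i ∈ A_l(x̄) ∪ A_u(x̄), Σ_{i∈N(x̄)} d_i·g_i(x̄) ≤ −σ₁·Σ_{i∈N(x̄)} g_i(x̄)², and Σ_{i∈N(x̄)} d_i² ≤ σ₂²·Σ_{i∈N(x̄)} g_i(x̄)². Then there exists ᾱ > 0 such that for all α ∈ (0, ᾱ], f([x̄ + α d]♯) − f(x̄) ≤ γ·α·g(x̄)ᵀd. -/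
open Finset

open scoped Classical

lemma fderiv_apply_eq_sum' {n : ℕ} (f : (Fin n → ℝ) → ℝ) (x v : Fin n → ℝ) :
    fderiv ℝ f x v = ∑ i, grad f x i * v i := by
  have hv : v = ∑ i, v i • (Pi.single i (1:ℝ) : Fin n → ℝ) := by
    ext j
    simp [Finset.sum_apply, Pi.single_apply]
  conv_lhs => rw [hv]
  rw [map_sum]
  simp [grad, mul_comm]

lemma taylor_bound' {n : ℕ} (f : (Fin n → ℝ) → ℝ) (hf : ContDiff ℝ 2 f) (x : Fin n → ℝ) :
    ∃ L : ℝ, 0 ≤ L ∧ ∃ r : ℝ, 0 < r ∧ ∀ y : Fin n → ℝ, dist y x ≤ r →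
      f y - f x - fderiv ℝ f x (y - x) ≤ L * ‖y - x‖ ^ 2 := by
  have hf1 : ContDiff ℝ 1 (fderiv ℝ f) := hf.fderiv_right (by norm_num)
  obtain ⟨K, t, ht, hK⟩ := hf1.contDiffAt.exists_lipschitzOnWith
  obtain ⟨r0, hr0, hball⟩ := Metric.mem_nhds_iff.mp ht
  refine ⟨K, K.coe_nonneg, r0/2, by positivity, ?_⟩
  intro y hy
  set s := segment ℝ x y with hsdef
  have hs : Convex ℝ s := convex_segment _ _
  have hsx : x ∈ s := left_mem_segment _ _ _
  have hsy : y ∈ s := right_mem_segment _ _ _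
  have hsball : ∀ z ∈ s, dist z x ≤ ‖y - x‖ := by
    intro z hz
    have hc : Convex ℝ (Metric.closedBall x ‖y - x‖) := convex_closedBall _ _
    have := hc.segment_subset (Metric.mem_closedBall.mpr (by simp))
      (Metric.mem_closedBall.mpr (by rw [dist_eq_norm])) hz
    exact Metric.mem_closedBall.mp this
  have hst : ∀ z ∈ s, z ∈ t := by
    intro z hz
    apply hball
    have h1 := hsball z hz
    have h2 : ‖y - x‖ = dist y x := (dist_eq_norm _ _).symm
    exact Metric.mem_ball.mpr (by rw [h2] at h1; linarith)
  have key := Convex.norm_image_sub_le_of_norm_hasFDerivWithin_le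
    (f := fun z => f z - fderiv ℝ f x z)
    (f' := fun z => fderiv ℝ f z - fderiv ℝ f x)
    (fun z _ => ((hf.differentiable two_ne_zero z).hasFDerivAt.sub
      (fderiv ℝ f x).hasFDerivAt).hasFDerivWithinAt)
    (fun z hz => by
      have h1 : dist (fderiv ℝ f z) (fderiv ℝ f x) ≤ K * dist z x :=
        hK.dist_le_mul z (hst z hz) x (hst x hsx)
      have h2 : dist z x ≤ ‖y - x‖ := hsball z hz
      rw [dist_eq_norm] at h1
      calc ‖fderiv ℝ f z - fderiv ℝ f x‖ ≤ K * dist z x := h1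
        _ ≤ K * ‖y - x‖ := by
            exact mul_le_mul_of_nonneg_left h2 K.coe_nonneg)
    hs hsx hsy
  have hAx : (fderiv ℝ f x) (y - x) = (fderiv ℝ f x) y - (fderiv ℝ f x) x := map_sub _ _ _
  calc f y - f x - fderiv ℝ f x (y - x)
      = (f y - fderiv ℝ f x y) - (f x - fderiv ℝ f x x) := by rw [hAx]; ring
    _ ≤ ‖(f y - fderiv ℝ f x y) - (f x - fderiv ℝ f x x)‖ := by
        rw [Real.norm_eq_abs]; exact le_abs_self _
    _ ≤ K * ‖y - x‖ * ‖y - x‖ := key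
    _ = K * ‖y - x‖ ^ 2 := by ring

/-- Armijo-type sufficient decrease along a gradient-related direction in
the subspace of the estimated non-active variables. -/
theorem nonactive_descent {n : ℕ} (f : (Fin n → ℝ) → ℝ) (hf : ContDiff ℝ 2 f)
    (l u : Fin n → ℝ) (hlu : ∀ i, l i < u i) (ε : ℝ) (hε : 0 < ε)
    (x : Fin n → ℝ) (hx : ∀ i, l i ≤ x i ∧ x i ≤ u i)
    (γ σ1 σ2 : ℝ) (hγ0 : 0 < γ) (hγ1 : γ < 1) (hσ1 : 0 < σ1) (hσ2 : 0 < σ2)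
    (hNne : (estN f l u ε x).Nonempty)
    (hgN : ∃ i ∈ estN f l u ε x, grad f x i ≠ 0)
    (d : Fin n → ℝ)
    (hd0 : ∀ i ∈ estAl f l u ε x ∪ estAu f l u ε x, d i = 0)
    (hd1 : ∑ i ∈ Finset.univ.filter (· ∈ estN f l u ε x), d i * grad f x i ≤
      -σ1 * ∑ i ∈ Finset.univ.filter (· ∈ estN f l u ε x), grad f x i ^ 2)
    (hd2 : ∑ i ∈ Finset.univ.filter (· ∈ estN f l u ε x), d i ^ 2 ≤
      σ2 ^ 2 * ∑ i ∈ Finset.univ.filter (· ∈ estN f l u ε x), grad f x i ^ 2) :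
    ∃ abar > (0 : ℝ), ∀ α : ℝ, 0 < α → α ≤ abar →
      f (projBox l u (fun i => x i + α * d i)) - f x ≤
        γ * α * ∑ i, grad f x i * d i := by
  classical
  obtain ⟨i0, hi0N⟩ := hNne
  have hnefin : Nonempty (Fin n) := ⟨i0⟩
  set N : Finset (Fin n) := Finset.univ.filter (· ∈ estN f l u ε x) with hNdef
  set S : ℝ := ∑ i ∈ N, grad f x i ^ 2 with hSdef
  have hSnonneg : 0 ≤ S := Finset.sum_nonneg fun i _ => sq_nonneg _
  have hSpos : 0 < S := by
    obtain ⟨j, hjN, hgj⟩ := hgN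
    have hjN' : j ∈ N := by simp [hNdef, hjN]
    have h1 := Finset.single_le_sum (f := fun i => grad f x i ^ 2)
      (fun i _ => sq_nonneg _) hjN'
    have h2 : 0 < grad f x j ^ 2 := by positivity
    have h1' : grad f x j ^ 2 ≤ S := by simpa [hSdef] using h1
    linarith
  have hden : ∀ i, 0 < (l i - x i) ^ 2 + (u i - x i) ^ 2 := by
    intro i
    by_contra hc
    push_neg at hc
    have h1 : (l i - x i) ^ 2 = 0 := by nlinarith [sq_nonneg (l i - x i), sq_nonneg (u i - x i)]
    have h2 : (u i - x i) ^ 2 = 0 := by nlinarith [sq_nonneg (l i - x i), sq_nonneg (u i - x i)]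
    have e1 : l i - x i = 0 := by
      have := sq_eq_zero_iff.mp h1; exact this
    have e2 : u i - x i = 0 := by
      have := sq_eq_zero_iff.mp h2; exact this
    have := hlu i
    linarith
  have hmem : ∀ i, d i ≠ 0 → i ∈ estN f l u ε x := by
    intro i hdi
    by_contra hiN
    apply hdi
    apply hd0
    simp only [estN, Set.mem_setOf_eq, not_and, not_not] at hiN
    by_cases hAl : i ∈ estAl f l u ε x
    · exact Set.mem_union_left _ hAl
    · exact Set.mem_union_right _ (hiN hAl)
  have hml : ∀ i, i ∈ estN f l u ε x → 0 < grad f x i → l i < x i := by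
    intro i hiN hg
    have hAl : i ∉ estAl f l u ε x := hiN.1
    by_contra hlt
    push_neg at hlt
    have hxl : x i ≤ l i := hlt
    have hlam : 0 ≤ lamMul f l u x i :=
      mul_nonneg (div_nonneg (sq_nonneg _) (hden i).le) hg.le
    exact hAl ⟨(hx i).1, by nlinarith [mul_nonneg hε.le hlam], hg⟩
  have hmu : ∀ i, i ∈ estN f l u ε x → grad f x i < 0 → x i < u i := by
    intro i hiN hg
    have hAu : i ∉ estAu f l u ε x := hiN.2
    by_contra hlt
    push_neg at hlt
    have hmun : 0 ≤ muMul f l u x i := by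
      have : (l i - x i) ^ 2 / ((l i - x i) ^ 2 + (u i - x i) ^ 2) * grad f x i ≤ 0 :=
        mul_nonpos_of_nonneg_of_nonpos (div_nonneg (sq_nonneg _) (hden i).le) hg.le
      simpa [muMul] using this
    exact hAu ⟨by nlinarith [mul_nonneg hε.le hmun], (hx i).2, hg⟩
  -- per-coordinate safe step sizes
  set c : Fin n → ℝ := fun i =>
    if d i = 0 then 1
    else if 0 < grad f x i then (x i - l i) / |d i|
    else if grad f x i < 0 then (u i - x i) / |d i| else 1 with hcdef
  have hcpos : ∀ i, 0 < c i := by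
    intro i
    rcases eq_or_ne (d i) 0 with h | h
    · simp [hcdef, h]
    · have hiN := hmem i h
      have habs : 0 < |d i| := abs_pos.mpr h
      rcases lt_trichotomy (grad f x i) 0 with hg | hg | hg
      · have : c i = (u i - x i) / |d i| := by
          simp [hcdef, h, not_lt.mpr hg.le, hg]
        rw [this]
        exact div_pos (by linarith [hmu i hiN hg]) habs
      · simp [hcdef, h, hg]
      · have : c i = (x i - l i) / |d i| := by simp [hcdef, h, hg]
        rw [this]
        exact div_pos (by linarith [hml i hiN hg]) habs
  set abar1 : ℝ := Finset.univ.inf' Finset.univ_nonempty c with habar1def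
  have habar1pos : 0 < abar1 := by
    rw [habar1def, Finset.lt_inf'_iff]
    exact fun i _ => hcpos i
  -- componentwise projection bounds
  have hproj_abs : ∀ α : ℝ, 0 < α → ∀ i,
      |projBox l u (fun j => x j + α * d j) i - x i| ≤ α * |d i| := by
    intro α hα i
    have h1 := (hx i).1
    have h2 := (hx i).2
    have e1 : α * d i ≤ α * |d i| := mul_le_mul_of_nonneg_left (le_abs_self _) hα.le
    have e2 : -(α * |d i|) ≤ α * d i := by
      have := mul_le_mul_of_nonneg_left (neg_abs_le (d i)) hα.le
      linarith
    have hub : projBox l u (fun j => x j + α * d j) i ≤ x i + α * |d i| := by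
      simp only [projBox]
      apply (min_le_right _ _).trans
      apply max_le (by linarith [mul_nonneg hα.le (abs_nonneg (d i))]) (by linarith)
    have hlb : x i - α * |d i| ≤ projBox l u (fun j => x j + α * d j) i := by
      simp only [projBox]
      apply le_min (by linarith [mul_nonneg hα.le (abs_nonneg (d i))])
      exact le_trans (by linarith) (le_max_right _ _)
    rw [abs_le]
    constructor <;> [linarith; linarith]
  have hproj_key : ∀ α : ℝ, 0 < α → α ≤ abar1 → ∀ i,
      grad f x i * (projBox l u (fun j => x j + α * d j) i - x i) ≤
        α * (grad f x i * d i) := by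
    intro α hα hαle i
    have hαc : α ≤ c i := hαle.trans (Finset.inf'_le _ (Finset.mem_univ i))
    rcases eq_or_ne (d i) 0 with hdi | hdi
    · have hy : projBox l u (fun j => x j + α * d j) i = x i := by
        simp [projBox, hdi, max_eq_right (hx i).1, min_eq_right (hx i).2]
      simp [hy, hdi]
    · have hiN := hmem i hdi
      have habs : 0 < |d i| := abs_pos.mpr hdi
      rcases lt_trichotomy (grad f x i) 0 with hg | hg | hg
      · have hcid : c i = (u i - x i) / |d i| := by
          simp [hcdef, hdi, not_lt.mpr hg.le, hg]
        have h1 : α * |d i| ≤ u i - x i := by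
          rw [hcid, le_div_iff₀ habs] at hαc
          linarith
        have e1 : α * d i ≤ α * |d i| := mul_le_mul_of_nonneg_left (le_abs_self _) hα.le
        have hy : x i + α * d i ≤ projBox l u (fun j => x j + α * d j) i := by
          simp only [projBox]
          exact le_min (by linarith) (le_max_right _ _)
        nlinarith [mul_le_mul_of_nonpos_left hy hg.le]
      · simp [hg]
      · have hcid : c i = (x i - l i) / |d i| := by simp [hcdef, hdi, hg]
        have h1 : α * |d i| ≤ x i - l i := by
          rw [hcid, le_div_iff₀ habs] at hαc
          linarith
        have e2 : -(α * |d i|) ≤ α * d i := by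
          have := mul_le_mul_of_nonneg_left (neg_abs_le (d i)) hα.le
          linarith
        have hy : projBox l u (fun j => x j + α * d j) i ≤ x i + α * d i := by
          simp only [projBox]
          exact (min_le_right _ _).trans_eq (max_eq_right (by linarith))
        nlinarith [mul_le_mul_of_nonneg_left hy hg.le]
  -- Taylor expansion data
  obtain ⟨L, hL0, r, hr, hTay⟩ := taylor_bound' f hf x
  set M : ℝ := σ2 * Real.sqrt S with hMdef
  have hMpos : 0 < M := mul_pos hσ2 (Real.sqrt_pos.mpr hSpos)
  have hM2 : M ^ 2 = σ2 ^ 2 * S := by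
    rw [hMdef, mul_pow, Real.sq_sqrt hSnonneg]
  have hdsq : ∀ i, d i ^ 2 ≤ σ2 ^ 2 * S := by
    intro i
    rcases eq_or_ne (d i) 0 with h | h
    · rw [h]
      simpa using mul_nonneg (sq_nonneg σ2) hSnonneg
    · have hiN' : i ∈ N := by simp [hNdef, hmem i h]
      have h1 : d i ^ 2 ≤ ∑ j ∈ N, d j ^ 2 :=
        Finset.single_le_sum (f := fun j => d j ^ 2) (fun j _ => sq_nonneg _) hiN'
      exact h1.trans hd2
  have hdM : ∀ i, |d i| ≤ M := by
    intro i
    nlinarith [hdsq i, sq_abs (d i), abs_nonneg (d i), hMpos]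
  -- gradient-direction inner product
  set T : ℝ := ∑ i, grad f x i * d i with hTdef
  have hzero : ∀ i ∈ Finset.univ, i ∉ N → grad f x i * d i = 0 := by
    intro i _ hiN
    have hdi : d i = 0 := by
      by_contra h
      exact hiN (by simp [hNdef, hmem i h])
    simp [hdi]
  have hTeq : T = ∑ i ∈ N, d i * grad f x i := by
    rw [hTdef, ← Finset.sum_subset (Finset.subset_univ N) hzero]
    exact Finset.sum_congr rfl fun i _ => mul_comm _ _
  have hT : T ≤ -σ1 * S := by rw [hTeq]; exact hd1
  -- the step bound
  set abar : ℝ := min abar1 (min (r / (M + 1)) ((1 - γ) * σ1 / ((L + 1) * σ2 ^ 2)))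
    with habardef
  have habarpos : 0 < abar := by
    apply lt_min habar1pos
    apply lt_min
    · exact div_pos hr (by linarith [hMpos])
    · exact div_pos (mul_pos (by linarith) hσ1) (mul_pos (by linarith) (pow_pos hσ2 2))
  refine ⟨abar, habarpos, ?_⟩
  intro α hα hαabar
  have hα1 : α ≤ abar1 := hαabar.trans (min_le_left _ _)
  have hα2 : α ≤ r / (M + 1) := hαabar.trans ((min_le_right _ _).trans (min_le_left _ _))
  have hα3 : α ≤ (1 - γ) * σ1 / ((L + 1) * σ2 ^ 2) :=
    hαabar.trans ((min_le_right _ _).trans (min_le_right _ _))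
  set y : Fin n → ℝ := projBox l u (fun i => x i + α * d i) with hydef
  have hyx : ∀ i, |y i - x i| ≤ α * M := fun i =>
    (hproj_abs α hα i).trans (mul_le_mul_of_nonneg_left (hdM i) hα.le)
  have hdist : dist y x ≤ α * M := by
    rw [dist_pi_le_iff (mul_nonneg hα.le hMpos.le)]
    intro i
    rw [Real.dist_eq]
    exact hyx i
  have hnorm : ‖y - x‖ ≤ α * M := by
    rw [← dist_eq_norm]
    exact hdist
  have hdistr : dist y x ≤ r := by
    have h1 : α * (M + 1) ≤ r := by
      rw [le_div_iff₀ (by linarith [hMpos] : (0:ℝ) < M + 1)] at hα2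
      linarith
    linarith [hdist, mul_pos hα hMpos]
  have hTay' := hTay y hdistr
  have hfd : fderiv ℝ f x (y - x) ≤ α * T := by
    rw [fderiv_apply_eq_sum' f x (y - x), hTdef, Finset.mul_sum]
    apply Finset.sum_le_sum
    intro i _
    have := hproj_key α hα hα1 i
    simpa [Pi.sub_apply] using this
  have hnorm2 : ‖y - x‖ ^ 2 ≤ (α * M) ^ 2 :=
    pow_le_pow_left₀ (norm_nonneg _) hnorm 2
  clear_value N S c abar1 M T abar y
  have hαq : (L + 1) * σ2 ^ 2 * α ≤ (1 - γ) * σ1 := by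
    rw [le_div_iff₀ (mul_pos (by linarith : (0:ℝ) < L + 1) (pow_pos hσ2 2))] at hα3
    linarith
  have e1 : L * (α * M) ^ 2 ≤ α * ((1 - γ) * σ1) * S := by
    have h3 := mul_le_mul_of_nonneg_right hαq (mul_nonneg hα.le hSnonneg)
    have h4 : 0 ≤ σ2 ^ 2 * α ^ 2 * S := mul_nonneg (by positivity) hSnonneg
    have h5 : L * (α * M) ^ 2 = L * α ^ 2 * (σ2 ^ 2 * S) := by
      rw [mul_pow, hM2]; ring
    rw [h5]
    nlinarith only [h3, h4]
  have hαT : α * T ≤ α * (-σ1 * S) := mul_le_mul_of_nonneg_left hT hα.le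
  have e2 := mul_le_mul_of_nonneg_left hαT (by linarith : (0:ℝ) ≤ 1 - γ)
  have e3 : L * ‖y - x‖ ^ 2 ≤ L * (α * M) ^ 2 := mul_le_mul_of_nonneg_left hnorm2 hL0
  calc f y - f x ≤ fderiv ℝ f x (y - x) + L * ‖y - x‖ ^ 2 := by linarith only [hTay']
    _ ≤ α * T + L * (α * M) ^ 2 := by linarith only [hfd, e3]
    _ ≤ γ * α * T := by nlinarith only [e1, e2]
end

section
/- Let x ∈ [l,u]. For every i ∈ A_l(x), the gradient component satisfies g_i(x) ≥ ((x_i − l_i)/ε)·[((l_i − x_i)² + (u_i − x_i)²)/(u_i − x_i)²], and consequently g_i(x)·(l_i − x_i) ≤ −(1/ε)·(l_i − x_i)². -/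
open Finset

/-- gradient lower bound for components estimated active at the lower bound. -/
theorem lower_active_gradient_bound {n : ℕ} (f : (Fin n → ℝ) → ℝ) (hf : ContDiff ℝ 2 f)
    (l u : Fin n → ℝ) (hlu : ∀ i, l i < u i) (ε : ℝ) (hε : 0 < ε)
    (x : Fin n → ℝ) (hx : ∀ i, l i ≤ x i ∧ x i ≤ u i)
    (i : Fin n) (hi : i ∈ estAl f l u ε x) :
    grad f x i ≥ (x i - l i) / ε *
      (((l i - x i) ^ 2 + (u i - x i) ^ 2) / (u i - x i) ^ 2) ∧
    grad f x i * (l i - x i) ≤ -(1 / ε) * (l i - x i) ^ 2 := by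
  obtain ⟨hl, h2, hg⟩ := hi
  set g := grad f x i with hgdef
  have hxu : x i < u i := by
    rcases lt_or_eq_of_le (hx i).2 with h | h
    · exact h
    · exfalso
      have : lamMul f l u x i = 0 := by
        simp [lamMul, h, ← hgdef]
      rw [this] at h2
      nlinarith [hlu i]
  have hu2 : (0:ℝ) < (u i - x i) ^ 2 := pow_pos (by linarith) 2
  have hD : (0:ℝ) < (l i - x i) ^ 2 + (u i - x i) ^ 2 := by nlinarith [sq_nonneg (l i - x i)]
  have key : (x i - l i) * ((l i - x i) ^ 2 + (u i - x i) ^ 2) ≤ ε * ((u i - x i) ^ 2 * g) := by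
    have h2' : x i - l i ≤ ε * ((u i - x i) ^ 2 / ((l i - x i) ^ 2 + (u i - x i) ^ 2) * g) := by
      rw [lamMul, ← hgdef] at h2; linarith
    have hmul := mul_le_mul_of_nonneg_right h2' hD.le
    have heq : ε * ((u i - x i) ^ 2 / ((l i - x i) ^ 2 + (u i - x i) ^ 2) * g) *
        ((l i - x i) ^ 2 + (u i - x i) ^ 2) = ε * ((u i - x i) ^ 2 * g) := by
      field_simp
    linarith
  have part1 : g ≥ (x i - l i) / ε *
      (((l i - x i) ^ 2 + (u i - x i) ^ 2) / (u i - x i) ^ 2) := by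
    rw [ge_iff_le, div_mul_div_comm, div_le_iff₀ (by positivity)]
    nlinarith
  refine ⟨part1, ?_⟩
  have h1 : (x i - l i) / ε ≤ g := by
    have hq : (1:ℝ) ≤ ((l i - x i) ^ 2 + (u i - x i) ^ 2) / (u i - x i) ^ 2 := by
      rw [le_div_iff₀ hu2]; nlinarith
    calc (x i - l i) / ε = (x i - l i) / ε * 1 := by ring
    _ ≤ (x i - l i) / ε * (((l i - x i) ^ 2 + (u i - x i) ^ 2) / (u i - x i) ^ 2) := by
        apply mul_le_mul_of_nonneg_left hq (div_nonneg (by linarith) hε.le)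
    _ ≤ g := part1
  have := mul_le_mul_of_nonneg_left h1 (sub_nonneg.mpr hl)
  rw [div_eq_mul_inv] at this
  rw [one_div]
  nlinarith [this]
end

section
/- Let x ∈ [l,u]. For every i ∈ A_u(x), the gradient component satisfies g_i(x) ≤ ((x_i − u_i)/ε)·[((l_i − x_i)² + (u_i − x_i)²)/(l_i − x_i)²], and consequently g_i(x)·(u_i − x_i) ≤ −(1/ε)·(u_i − x_i)². -/
open Finset

/-- gradient upper bound for components estimated active at the upper bound. -/
theorem upper_active_gradient_bound {n : ℕ} (f : (Fin n → ℝ) → ℝ) (hf : ContDiff ℝ 2 f)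
    (l u : Fin n → ℝ) (hlu : ∀ i, l i < u i) (ε : ℝ) (hε : 0 < ε)
    (x : Fin n → ℝ) (hx : ∀ i, l i ≤ x i ∧ x i ≤ u i)
    (i : Fin n) (hi : i ∈ estAu f l u ε x) :
    grad f x i ≤ (x i - u i) / ε *
      (((l i - x i) ^ 2 + (u i - x i) ^ 2) / (l i - x i) ^ 2) ∧
    grad f x i * (u i - x i) ≤ -(1 / ε) * (u i - x i) ^ 2 := by
  obtain ⟨h1, h2, h3⟩ := hi
  set g := grad f x i with hg
  have hlx : l i < x i := by
    by_contra h
    push_neg at h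
    have hxl : x i = l i := le_antisymm h (hx i).1
    simp only [muMul, hg] at h1
    rw [hxl] at h1
    simp only [sub_self] at h1
    norm_num at h1
    linarith [hlu i]
  have ha : (0:ℝ) < (l i - x i) ^ 2 := by
    have : l i - x i ≠ 0 := by intro h; apply absurd hlx; linarith
    positivity
  have hb : (0:ℝ) ≤ u i - x i := by linarith
  have hS : (0:ℝ) < (l i - x i) ^ 2 + (u i - x i) ^ 2 := by positivity
  simp only [muMul, hg] at h1
  have key : ε * ((l i - x i) ^ 2 / ((l i - x i) ^ 2 + (u i - x i) ^ 2)) * g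
      ≤ x i - u i := by linarith
  constructor
  · rw [div_mul_eq_mul_div, le_div_iff₀ hε, ← sub_nonneg]
    have hk : (0:ℝ) ≤ x i - u i
        - ε * ((l i - x i) ^ 2 / ((l i - x i) ^ 2 + (u i - x i) ^ 2)) * g := by linarith
    have h4 : (x i - u i) * (((l i - x i) ^ 2 + (u i - x i) ^ 2) / (l i - x i) ^ 2)
        - g * ε = (x i - u i - ε * ((l i - x i) ^ 2 /
        ((l i - x i) ^ 2 + (u i - x i) ^ 2)) * g) *
        (((l i - x i) ^ 2 + (u i - x i) ^ 2) / (l i - x i) ^ 2) := by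
      field_simp [ha.ne', hS.ne', sub_ne_zero.mpr (ne_of_lt hlx)]
    rw [h4]
    exact mul_nonneg hk (by positivity)
  · have h5 : ε * ((l i - x i) ^ 2 / ((l i - x i) ^ 2 + (u i - x i) ^ 2)) * g * (u i - x i)
        ≤ (x i - u i) * (u i - x i) := mul_le_mul_of_nonneg_right key hb
    have h6 : (l i - x i) ^ 2 / ((l i - x i) ^ 2 + (u i - x i) ^ 2) ≤ 1 := by
      rw [div_le_one hS]; nlinarith [sq_nonneg (u i - x i)]
    have h7 : (0:ℝ) < (l i - x i) ^ 2 / ((l i - x i) ^ 2 + (u i - x i) ^ 2) := by positivity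
    have hg' : g * (u i - x i) ≤ 0 := mul_nonpos_of_nonpos_of_nonneg (le_of_lt h3) hb
    have h8 : g * (u i - x i) ≤ ((l i - x i) ^ 2 / ((l i - x i) ^ 2 + (u i - x i) ^ 2))
        * (g * (u i - x i)) := by nlinarith [hg', h6, h7]
    have h9 : ε * (g * (u i - x i)) ≤ -((u i - x i) ^ 2) := by nlinarith [h5, h8, hε]
    have h10 : g * (u i - x i) ≤ (-((u i - x i) ^ 2)) / ε := by
      rw [le_div_iff₀ hε]; nlinarith [h9]
    have h11 : -(1 / ε) * (u i - x i) ^ 2 = (-((u i - x i) ^ 2)) / ε := by ring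
    rw [h11]; exact h10
end

section
/- Let x ∈ [l,u], and define x̃ by x̃_i := l_i for i ∈ A_l(x), x̃_i := u_i for i ∈ A_u(x), and x̃_i := x_i for i ∈ N(x). Then g(x)ᵀ(x̃ − x) ≤ −(1/ε)·‖x − x̃‖². -/
open Finset

/-- directional-derivative bound for the move to the estimated active bounds. -/
theorem active_set_directional_bound {n : ℕ} (f : (Fin n → ℝ) → ℝ) (hf : ContDiff ℝ 2 f)
    (l u : Fin n → ℝ) (hlu : ∀ i, l i < u i) (ε : ℝ) (hε : 0 < ε)
    (x : Fin n → ℝ) (hx : ∀ i, l i ≤ x i ∧ x i ≤ u i)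
    (xt : Fin n → ℝ)
    (hxt1 : ∀ i ∈ estAl f l u ε x, xt i = l i)
    (hxt2 : ∀ i ∈ estAu f l u ε x, xt i = u i)
    (hxt3 : ∀ i ∈ estN f l u ε x, xt i = x i) :
    ∑ i, grad f x i * (xt i - x i) ≤ -(1 / ε) * ∑ i, (x i - xt i) ^ 2 := by
  have key : ∀ i : Fin n, grad f x i * (xt i - x i) ≤ -(1 / ε) * (x i - xt i) ^ 2 := by
    intro i
    have hD : 0 < (l i - x i) ^ 2 + (u i - x i) ^ 2 := by
      nlinarith [sq_nonneg (l i - x i + (u i - x i)), hlu i, sq_nonneg (l i - u i)]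
    by_cases h1 : i ∈ estAl f l u ε x
    · rw [hxt1 i h1]
      obtain ⟨hl1, hl2, hg⟩ := h1
      have hc : (u i - x i) ^ 2 / ((l i - x i) ^ 2 + (u i - x i) ^ 2) ≤ 1 := by
        rw [div_le_one hD]; nlinarith [sq_nonneg (l i - x i)]
      have hlam : lamMul f l u x i ≤ grad f x i := by
        unfold lamMul
        nlinarith [mul_le_of_le_one_left (le_of_lt hg) hc]
      have hd : x i - l i ≤ ε * grad f x i := by nlinarith
      have hd0 : 0 ≤ x i - l i := by linarith
      rw [neg_mul, le_neg, div_mul_eq_mul_div, div_le_iff₀ hε]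
      nlinarith [mul_le_mul_of_nonneg_left hd hd0]
    · by_cases h2 : i ∈ estAu f l u ε x
      · rw [hxt2 i h2]
        obtain ⟨hu1, hu2, hg⟩ := h2
        have hc : (l i - x i) ^ 2 / ((l i - x i) ^ 2 + (u i - x i) ^ 2) ≤ 1 := by
          rw [div_le_one hD]; nlinarith [sq_nonneg (u i - x i)]
        have hmu : muMul f l u x i ≤ -grad f x i := by
          unfold muMul
          nlinarith [mul_le_of_le_one_left (neg_nonneg.mpr (le_of_lt hg)) hc]
        have hd : u i - x i ≤ ε * (-grad f x i) := by nlinarith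
        have hd0 : 0 ≤ u i - x i := by linarith
        rw [neg_mul, le_neg, div_mul_eq_mul_div, div_le_iff₀ hε]
        nlinarith [mul_le_mul_of_nonneg_left hd hd0]
      · have hN : i ∈ estN f l u ε x := ⟨h1, h2⟩
        rw [hxt3 i hN]
        simp
  calc ∑ i, grad f x i * (xt i - x i) ≤ ∑ i, -(1 / ε) * (x i - xt i) ^ 2 :=
        Finset.sum_le_sum fun i _ => key i
    _ = -(1 / ε) * ∑ i, (x i - xt i) ^ 2 := by rw [Finset.mul_sum]
end

section
/- Let x̄ ∈ [l,u] and let d ∈ ℝⁿ satisfy d_i = 0 for all i ∈ A_l(x̄) ∪ A_u(x̄). Then there exists α̂ > 0 such that for all α ∈ (0, α̂], g(x̄)ᵀ([x̄ + α d]♯ − x̄) ≤ α·Σ_{i∈N(x̄)} g_i(x̄)·d_i. -/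
open Finset

open scoped Classical

/-- for small stepsizes, the directional derivative term of the projected
step is majorized by the non-active part of the directional derivative. -/
theorem projected_step_directional_bound {n : ℕ} (f : (Fin n → ℝ) → ℝ)
    (hf : ContDiff ℝ 2 f) (l u : Fin n → ℝ) (hlu : ∀ i, l i < u i) (ε : ℝ) (hε : 0 < ε)
    (x : Fin n → ℝ) (hx : ∀ i, l i ≤ x i ∧ x i ≤ u i)
    (d : Fin n → ℝ) (hd0 : ∀ i ∈ estAl f l u ε x ∪ estAu f l u ε x, d i = 0) :
    ∃ ahat > (0 : ℝ), ∀ α : ℝ, 0 < α → α ≤ ahat →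
      ∑ i, grad f x i * (projBox l u (fun j => x j + α * d j) i - x i) ≤
        α * ∑ i ∈ Finset.univ.filter (· ∈ estN f l u ε x), grad f x i * d i := by
  classical
  -- key sign facts for non-active indices at the bounds
  have keyL : ∀ i, i ∈ estN f l u ε x → x i = l i → grad f x i ≤ 0 := by
    intro i hi hxl
    by_contra h
    push_neg at h
    apply hi.1
    have hul : u i - x i ≠ 0 := by have := hlu i; intro hc; rw [hxl] at hc; linarith
    have hlam : lamMul f l u x i = grad f x i := by
      unfold lamMul
      rw [show l i - x i = 0 by rw [hxl]; ring]
      rw [zero_pow (by norm_num), zero_add, div_self (pow_ne_zero 2 hul), one_mul]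
    refine ⟨(hx i).1, ?_, h⟩
    rw [hlam, hxl]
    nlinarith
  have keyU : ∀ i, i ∈ estN f l u ε x → x i = u i → 0 ≤ grad f x i := by
    intro i hi hxu
    by_contra h
    push_neg at h
    apply hi.2
    have hul : l i - x i ≠ 0 := by have := hlu i; intro hc; rw [hxu] at hc; linarith
    have hmu : muMul f l u x i = -grad f x i := by
      unfold muMul
      rw [show u i - x i = 0 by rw [hxu]; ring]
      rw [zero_pow (by norm_num), add_zero, div_self (pow_ne_zero 2 hul), one_mul]
    refine ⟨?_, (hx i).2, h⟩
    rw [hmu, hxu]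
    nlinarith
  -- stepsize bound per coordinate
  set c : Fin n → ℝ := fun i =>
    if 0 < d i ∧ x i < u i then (u i - x i) / d i
    else if d i < 0 ∧ l i < x i then (x i - l i) / (-d i) else 1 with hc
  have hcpos : ∀ i, 0 < c i := by
    intro i
    simp only [hc]
    split_ifs with h1 h2
    · exact div_pos (by linarith [h1.2]) h1.1
    · exact div_pos (by linarith [h2.2]) (by linarith [h2.1])
    · norm_num
  set s : Finset ℝ := insert (1 : ℝ) (Finset.image c Finset.univ) with hs
  have hsne : s.Nonempty := ⟨1, by simp [hs]⟩
  refine ⟨s.min' hsne, ?_, ?_⟩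
  · have hmem := s.min'_mem hsne
    simp only [hs, Finset.mem_insert, Finset.mem_image, Finset.mem_univ, true_and] at hmem
    rcases hmem with h | ⟨i, hi⟩
    · rw [h]; norm_num
    · rw [← hi]; exact hcpos i
  · intro α hα hαle
    have hαc : ∀ i, α ≤ c i := by
      intro i
      exact le_trans hαle (s.min'_le _ (by simp [hs]))
    rw [Finset.mul_sum, Finset.sum_filter]
    apply Finset.sum_le_sum
    intro i _
    simp only [projBox]
    by_cases hdi : d i = 0
    · rw [hdi]
      rw [show x i + α * 0 = x i by ring, max_eq_right (hx i).1, min_eq_right (hx i).2]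
      split_ifs <;> simp
    · have hiN : i ∈ estN f l u ε x := by
        by_contra h
        apply hdi
        apply hd0
        simp only [estN, Set.mem_setOf_eq, not_and_or, not_not] at h
        rcases h with h | h
        · exact Set.mem_union_left _ h
        · exact Set.mem_union_right _ h
      rw [if_pos hiN]
      rcases lt_or_gt_of_ne hdi with hneg | hpos
      · by_cases hxl : l i < x i
        · have hcle : α ≤ (x i - l i) / (-d i) := by
            have := hαc i
            simp only [hc] at this
            rw [if_neg (by rintro ⟨h1, _⟩; linarith), if_pos ⟨hneg, hxl⟩] at this
            exact this
          have h1 : l i ≤ x i + α * d i := by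
            rw [le_div_iff₀ (by linarith)] at hcle
            nlinarith
          have h2 : x i + α * d i ≤ u i := by nlinarith [(hx i).2]
          rw [max_eq_right h1, min_eq_right h2]
          have : x i + α * d i - x i = α * d i := by ring
          rw [this]; rw [show grad f x i * (α * d i) = α * (grad f x i * d i) by ring]
        · have hxeq : x i = l i := le_antisymm (by linarith) (hx i).1
          have hg : grad f x i ≤ 0 := keyL i hiN hxeq
          have h1 : x i + α * d i < l i := by nlinarith
          rw [max_eq_left (le_of_lt h1), min_eq_right (le_of_lt (hlu i))]
          rw [hxeq, sub_self, mul_zero]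
          nlinarith
      · by_cases hxu : x i < u i
        · have hcle : α ≤ (u i - x i) / d i := by
            have := hαc i
            simp only [hc] at this
            rw [if_pos ⟨hpos, hxu⟩] at this
            exact this
          have h2 : x i + α * d i ≤ u i := by
            rw [le_div_iff₀ hpos] at hcle
            nlinarith
          have h1 : l i ≤ x i + α * d i := by nlinarith [(hx i).1]
          rw [max_eq_right h1, min_eq_right h2]
          have : x i + α * d i - x i = α * d i := by ring
          rw [this]; rw [show grad f x i * (α * d i) = α * (grad f x i * d i) by ring]
        · have hxeq : x i = u i := le_antisymm (hx i).2 (by linarith)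
          have hg : 0 ≤ grad f x i := keyU i hiN hxeq
          have h1 : u i < x i + α * d i := by nlinarith
          have : max (l i) (x i + α * d i) = x i + α * d i :=
            max_eq_right (by nlinarith [hlu i])
          rw [this, min_eq_left (le_of_lt h1)]
          rw [hxeq, sub_self, mul_zero]
          nlinarith
end

section
/- Let x̄ ∈ [l,u], σ₁ > 0, σ₂ > 0, and let d ∈ ℝⁿ satisfy d_i = 0 for all i ∈ A_l(x̄) ∪ A_u(x̄), Σ_{i∈N(x̄)} d_i·g_i(x̄) ≤ −σ₁·Σ_{i∈N(x̄)} g_i(x̄)², and Σ_{i∈N(x̄)} d_i² ≤ σ₂²·Σ_{i∈N(x̄)} g_i(x̄)². Then for every α > 0, ‖[x̄ + α d]♯ − x̄‖² ≤ −α²·(σ₂²/σ₁)·Σ_{i∈N(x̄)} g_i(x̄)·d_i. -/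
open Finset

open scoped Classical

lemma proj_sq_le (L U a b : ℝ) (h1 : L ≤ b) (h2 : b ≤ U) :
    (min U (max L a) - b) ^ 2 ≤ (a - b) ^ 2 := by
  rcases le_total a L with h | h <;> rcases le_total a U with h' | h' <;>
    simp [min_def, max_def, *] <;> (try split) <;> nlinarith


/-- squared-norm bound for the projected step along a gradient-related
direction supported on the estimated non-active variables. -/
theorem projected_step_norm_bound {n : ℕ} (f : (Fin n → ℝ) → ℝ) (hf : ContDiff ℝ 2 f)
    (l u : Fin n → ℝ) (hlu : ∀ i, l i < u i) (ε : ℝ) (hε : 0 < ε)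
    (x : Fin n → ℝ) (hx : ∀ i, l i ≤ x i ∧ x i ≤ u i)
    (σ1 σ2 : ℝ) (hσ1 : 0 < σ1) (hσ2 : 0 < σ2)
    (d : Fin n → ℝ)
    (hd0 : ∀ i ∈ estAl f l u ε x ∪ estAu f l u ε x, d i = 0)
    (hd1 : ∑ i ∈ Finset.univ.filter (· ∈ estN f l u ε x), d i * grad f x i ≤
      -σ1 * ∑ i ∈ Finset.univ.filter (· ∈ estN f l u ε x), grad f x i ^ 2)
    (hd2 : ∑ i ∈ Finset.univ.filter (· ∈ estN f l u ε x), d i ^ 2 ≤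
      σ2 ^ 2 * ∑ i ∈ Finset.univ.filter (· ∈ estN f l u ε x), grad f x i ^ 2) :
    ∀ α : ℝ, 0 < α →
      ∑ i, (projBox l u (fun j => x j + α * d j) i - x i) ^ 2 ≤
        -(α ^ 2 * (σ2 ^ 2 / σ1)) *
          ∑ i ∈ Finset.univ.filter (· ∈ estN f l u ε x), grad f x i * d i := fun α hα => by
  classical
  set N := Finset.univ.filter (· ∈ estN f l u ε x) with hN
  set S := ∑ i ∈ N, grad f x i ^ 2 with hS
  have hdz : ∀ i, i ∉ N → d i = 0 := by
    intro i hi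
    apply hd0
    simp only [hN, Finset.mem_filter, Finset.mem_univ, true_and] at hi
    simp only [estN, Set.mem_setOf_eq] at hi
    push_neg at hi
    by_cases h : i ∈ estAl f l u ε x
    · exact Set.mem_union_left _ h
    · exact Set.mem_union_right _ (hi h)
  have step1 : ∑ i, (projBox l u (fun j => x j + α * d j) i - x i) ^ 2 ≤
      α ^ 2 * ∑ i ∈ N, d i ^ 2 := by
    have h1 : ∑ i, (projBox l u (fun j => x j + α * d j) i - x i) ^ 2 ≤
        ∑ i, (α * d i) ^ 2 := by
      apply Finset.sum_le_sum
      intro i _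
      have := proj_sq_le (l i) (u i) (x i + α * d i) (x i) (hx i).1 (hx i).2
      simpa [projBox] using this
    have h2 : ∑ i, (α * d i) ^ 2 = α ^ 2 * ∑ i ∈ N, d i ^ 2 := by
      rw [Finset.mul_sum]
      rw [← Finset.sum_subset (Finset.subset_univ N)]
      · exact Finset.sum_congr rfl fun i _ => by ring
      · intro i _ hi
        simp [hdz i hi]
    linarith
  have hS0 : (0:ℝ) ≤ S := Finset.sum_nonneg fun i _ => sq_nonneg _
  have hT : ∑ i ∈ N, grad f x i * d i = ∑ i ∈ N, d i * grad f x i :=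
    Finset.sum_congr rfl fun i _ => mul_comm _ _
  rw [hT]
  have h3 : α ^ 2 * ∑ i ∈ N, d i ^ 2 ≤ α ^ 2 * (σ2 ^ 2 * S) := by
    apply mul_le_mul_of_nonneg_left hd2 (sq_nonneg α)
  have h4 : α ^ 2 * (σ2 ^ 2 * S) ≤
      -(α ^ 2 * (σ2 ^ 2 / σ1)) * ∑ i ∈ N, d i * grad f x i := by
    have hα2 : (0:ℝ) ≤ α ^ 2 * σ2 ^ 2 / σ1 := by positivity
    have := hd1
    -- σ1 * S ≤ - T
    have hT1 : σ1 * S ≤ -(∑ i ∈ N, d i * grad f x i) := by linarith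
    have hm := mul_le_mul_of_nonneg_left hT1 hα2
    calc α ^ 2 * (σ2 ^ 2 * S) = α ^ 2 * σ2 ^ 2 / σ1 * (σ1 * S) := by
            field_simp
      _ ≤ α ^ 2 * σ2 ^ 2 / σ1 * -(∑ i ∈ N, d i * grad f x i) := hm
      _ = -(α ^ 2 * (σ2 ^ 2 / σ1)) * ∑ i ∈ N, d i * grad f x i := by ring
  linarith
end

section
/- Let {xᵏ} be a sequence of feasible points converging to x̄ ∈ [l,u], and let i be a fixed index such that i ∈ N(xᵏ) for all k and x̄_i = l_i. Then g_i(x̄) ≤ 0. Analogously, if i ∈ N(xᵏ) for all k and x̄_i = u_i, then g_i(x̄) ≥ 0. -/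
open Finset

/-- if an index stays in the non-active estimate along a convergent feasible
sequence, then at a limit point lying at a bound the gradient has the appropriate sign. -/
theorem nonactive_limit_gradient_sign {n : ℕ} (f : (Fin n → ℝ) → ℝ) (hf : ContDiff ℝ 2 f)
    (l u : Fin n → ℝ) (hlu : ∀ i, l i < u i) (ε : ℝ) (hε : 0 < ε)
    (xk : ℕ → Fin n → ℝ) (hfeas : ∀ k i, l i ≤ xk k i ∧ xk k i ≤ u i)
    (xbar : Fin n → ℝ) (hxbar : ∀ i, l i ≤ xbar i ∧ xbar i ≤ u i)
    (hconv : Filter.Tendsto xk Filter.atTop (nhds xbar))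
    (i : Fin n) (hiN : ∀ k, i ∈ estN f l u ε (xk k)) :
    (xbar i = l i → grad f xbar i ≤ 0) ∧ (xbar i = u i → 0 ≤ grad f xbar i) := by
  have hxi : Filter.Tendsto (fun k => xk k i) Filter.atTop (nhds (xbar i)) :=
    ((continuous_apply i).tendsto xbar).comp hconv
  have hgradc : Continuous (fun x => grad f x i) := by
    have h1 : Continuous (fderiv ℝ f) := hf.continuous_fderiv (by norm_num)
    exact h1.clm_apply continuous_const
  have hg : Filter.Tendsto (fun k => grad f (xk k) i) Filter.atTop (nhds (grad f xbar i)) :=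
    (hgradc.tendsto xbar).comp hconv
  have hne : u i - l i ≠ 0 := ne_of_gt (sub_pos.mpr (hlu i))
  have hdenbar : (l i - xbar i) ^ 2 + (u i - xbar i) ^ 2 ≠ 0 := by
    rcases eq_or_ne (xbar i) (l i) with h | h
    · rw [h]; intro hc; apply hne; nlinarith [sq_nonneg (u i - l i)]
    · intro hc
      have hne2 : l i - xbar i ≠ 0 := sub_ne_zero.mpr (Ne.symm h)
      have : (l i - xbar i) ^ 2 > 0 := by positivity
      nlinarith [sq_nonneg (u i - xbar i)]
  have hdent : Filter.Tendsto (fun k => (l i - xk k i) ^ 2 + (u i - xk k i) ^ 2)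
      Filter.atTop (nhds ((l i - xbar i) ^ 2 + (u i - xbar i) ^ 2)) := by
    exact (((tendsto_const_nhds.sub hxi).pow 2).add ((tendsto_const_nhds.sub hxi).pow 2))
  constructor
  · intro hl
    by_contra hpos
    push_neg at hpos
    have hlam : Filter.Tendsto (fun k => lamMul f l u (xk k) i) Filter.atTop
        (nhds (grad f xbar i)) := by
      have h1 : Filter.Tendsto (fun k => lamMul f l u (xk k) i) Filter.atTop
          (nhds ((u i - xbar i) ^ 2 / ((l i - xbar i) ^ 2 + (u i - xbar i) ^ 2)
            * grad f xbar i)) := by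
        exact ((((tendsto_const_nhds.sub hxi).pow 2).div hdent hdenbar).mul hg)
      convert h1 using 2
      rw [hl]
      field_simp
      ring
    have h1 : ∀ᶠ k in Filter.atTop, 0 < grad f (xk k) i :=
      hg.eventually (eventually_gt_nhds hpos)
    have h2 : ∀ᶠ k in Filter.atTop, xk k i ≤ l i + ε * lamMul f l u (xk k) i := by
      have ht : Filter.Tendsto (fun k => l i + ε * lamMul f l u (xk k) i - xk k i)
          Filter.atTop (nhds (l i + ε * grad f xbar i - xbar i)) :=
        (tendsto_const_nhds.add (hlam.const_mul ε)).sub hxi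
      have hpos' : 0 < l i + ε * grad f xbar i - xbar i := by
        rw [hl]; have := mul_pos hε hpos; linarith
      filter_upwards [ht.eventually (eventually_gt_nhds hpos')] with k hk
      linarith
    obtain ⟨k, hk1, hk2⟩ := (h1.and h2).exists
    exact (hiN k).1 ⟨(hfeas k i).1, hk2, hk1⟩
  · intro hu
    by_contra hneg
    push_neg at hneg
    have hmu : Filter.Tendsto (fun k => muMul f l u (xk k) i) Filter.atTop
        (nhds (-(grad f xbar i))) := by
      have h1 : Filter.Tendsto (fun k => muMul f l u (xk k) i) Filter.atTop
          (nhds (-((l i - xbar i) ^ 2 / ((l i - xbar i) ^ 2 + (u i - xbar i) ^ 2)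
            * grad f xbar i))) := by
        exact ((((tendsto_const_nhds.sub hxi).pow 2).div hdent hdenbar).mul hg).neg
      convert h1 using 2
      rw [hu]
      have hne' : l i - u i ≠ 0 := sub_ne_zero.mpr (ne_of_lt (hlu i))
      field_simp
      ring
    have h1 : ∀ᶠ k in Filter.atTop, grad f (xk k) i < 0 :=
      hg.eventually (eventually_lt_nhds hneg)
    have h2 : ∀ᶠ k in Filter.atTop, u i - ε * muMul f l u (xk k) i ≤ xk k i := by
      have ht : Filter.Tendsto (fun k => xk k i - (u i - ε * muMul f l u (xk k) i))
          Filter.atTop (nhds (xbar i - (u i - ε * (-(grad f xbar i))))) :=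
        hxi.sub (tendsto_const_nhds.sub (hmu.const_mul ε))
      have hpos' : 0 < xbar i - (u i - ε * (-(grad f xbar i))) := by
        rw [hu]; have := mul_pos hε (neg_pos.mpr hneg); linarith
      filter_upwards [ht.eventually (eventually_gt_nhds hpos')] with k hk
      linarith
    obtain ⟨k, hk1, hk2⟩ := (h1.and h2).exists
    exact (hiN k).2 ⟨hk2, (hfeas k i).2, hk1⟩
end

section
/- Let x* ∈ [l,u] be a stationary point of min f(x) subject to l ≤ x ≤ u. Then the multiplier functions evaluated at x* give exact KKT multipliers: setting λ* := λ(x*) and μ* := μ(x*), one has g(x*) − λ* + μ* = 0, (l_i − x*_i)λ*_i = 0, (x*_i − u_i)μ*_i = 0, and λ*_i ≥ 0, μ*_i ≥ 0 for all i. -/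
open Finset

/-- at a stationary point, the multiplier functions give exact KKT
multipliers. -/
theorem multiplier_functions_exact {n : ℕ} (f : (Fin n → ℝ) → ℝ) (hf : ContDiff ℝ 2 f)
    (l u : Fin n → ℝ) (hlu : ∀ i, l i < u i)
    (xs : Fin n → ℝ) (hfeas : ∀ i, l i ≤ xs i ∧ xs i ≤ u i)
    (hstat : IsBoxStationary f l u xs) :
    ∀ i, grad f xs i - lamMul f l u xs i + muMul f l u xs i = 0 ∧
      (l i - xs i) * lamMul f l u xs i = 0 ∧
      (xs i - u i) * muMul f l u xs i = 0 ∧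
      0 ≤ lamMul f l u xs i ∧ 0 ≤ muMul f l u xs i := by
  intro i
  have hd : (0:ℝ) < (l i - xs i) ^ 2 + (u i - xs i) ^ 2 := by
    rcases lt_or_ge (xs i) (u i) with h | h
    · have : (0:ℝ) < (u i - xs i) ^ 2 := pow_pos (by linarith) 2
      nlinarith [sq_nonneg (l i - xs i)]
    · have : (0:ℝ) < (l i - xs i) ^ 2 :=
        pow_two_pos_of_ne_zero (by intro h'; nlinarith [hlu i])
      nlinarith [sq_nonneg (u i - xs i)]
  have hd' : (l i - xs i) ^ 2 + (u i - xs i) ^ 2 ≠ 0 := ne_of_gt hd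
  unfold lamMul muMul
  obtain ⟨h1, h2, h3⟩ := hstat i
  obtain ⟨hfl, hfu⟩ := hfeas i
  rcases eq_or_lt_of_le hfl with hl | hl
  · have hg := h1 hl.symm
    have ha : l i - xs i = 0 := by linarith
    have hb : (u i - xs i) ^ 2 ≠ 0 := by
      have hxu : xs i < u i := by rw [← hl]; exact hlu i
      exact pow_ne_zero 2 (by intro h'; nlinarith)
    rw [ha]
    refine ⟨by field_simp; ring, by ring, by ring, ?_, by simp⟩
    have : (0:ℝ)^2 / (0 ^ 2 + (u i - xs i) ^ 2) * grad f xs i = 0 ∨ True := Or.inr trivial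
    have h4 : (u i - xs i) ^ 2 / ((0:ℝ) ^ 2 + (u i - xs i) ^ 2) = 1 := by
      field_simp; ring
    rw [h4]; linarith
  rcases eq_or_lt_of_le hfu with hu | hu
  · have hg := h2 hu
    have hb : u i - xs i = 0 := by linarith
    have ha : (l i - xs i) ^ 2 ≠ 0 :=
      pow_ne_zero 2 (by intro h'; nlinarith)
    rw [hb]
    have h4 : (l i - xs i) ^ 2 / ((l i - xs i) ^ 2 + (0:ℝ) ^ 2) = 1 := by
      field_simp; ring
    have h0 : (0:ℝ) ^ 2 / ((l i - xs i) ^ 2 + (0:ℝ) ^ 2) = 0 := by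
      rw [zero_pow (by norm_num), zero_div]
    have hxu0 : xs i - u i = 0 := by rw [hu]; ring
    refine ⟨?_, ?_, by rw [hxu0, zero_mul], ?_, ?_⟩
    · rw [h0, h4]; ring
    · simp
    · simp
    · rw [h4]; linarith
  · have hg := h3 hl hu
    rw [hg]
    norm_num
end
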